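/- arXiv:2208.13652 — 8 statements merged into one kernel-verified Lean document; each statement's English description precedes it below -/
import Mathlib

section
/- Let n ≥ 2 and let S and T be nonempty subsets of {1, …, n−1}. Define U_{S,T} = {s' − s : s, s' ∈ S, s' − s > 0} ∪ {t' − t : t, t' ∈ T, t' − t > 0} ∪ {s + t : s ∈ S, t ∈ T}. Then the greatest common divisor of the elements of U_{S,T} equals the greatest common divisor of the elements of {s + t : s ∈ S, t ∈ T}. -/
/-- For nonempty subsets `S, T ⊆ {1, …, n−1}`, the gcd of
`U_{S,T} = {s'−s > 0} ∪ {t'−t > 0} ∪ {s+t}` equals the gcd of `{s+t : s ∈ S, t ∈ T}`. -/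
theorem gcd_U_eq_gcd_sum (n : ℕ) (hn : 2 ≤ n) (S T : Finset ℕ)
    (hS : S.Nonempty) (hT : T.Nonempty)
    (hSsub : S ⊆ Finset.Icc 1 (n - 1)) (hTsub : T ⊆ Finset.Icc 1 (n - 1)) :
    (((S ×ˢ S).filter (fun p => p.1 < p.2)).image (fun p => p.2 - p.1) ∪
      ((T ×ˢ T).filter (fun p => p.1 < p.2)).image (fun p => p.2 - p.1) ∪
      (S ×ˢ T).image (fun p => p.1 + p.2)).gcd id
    = (S ×ˢ T).gcd (fun p => p.1 + p.2) := by
  obtain ⟨s0, hs0⟩ := hS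
  obtain ⟨t0, ht0⟩ := hT
  apply Nat.dvd_antisymm
  · -- gcd U ∣ gcd sums: U contains all the sums
    apply Finset.dvd_gcd
    intro p hp
    have : p.1 + p.2 ∈ (((S ×ˢ S).filter (fun p => p.1 < p.2)).image (fun p => p.2 - p.1) ∪
      ((T ×ˢ T).filter (fun p => p.1 < p.2)).image (fun p => p.2 - p.1) ∪
      (S ×ˢ T).image (fun p => p.1 + p.2)) := by
      apply Finset.mem_union_right
      exact Finset.mem_image_of_mem _ hp
    exact Finset.gcd_dvd (f := id) this
  · -- gcd sums ∣ gcd U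
    apply Finset.dvd_gcd
    intro x hx
    simp only [Finset.mem_union, Finset.mem_image, Finset.mem_filter, Finset.mem_product] at hx
    set g := (S ×ˢ T).gcd (fun p => p.1 + p.2) with hg
    have hsum : ∀ s ∈ S, ∀ t ∈ T, g ∣ s + t := by
      intro s hs t ht
      have hm : (s, t) ∈ S ×ˢ T := Finset.mem_product.mpr ⟨hs, ht⟩
      exact Finset.gcd_dvd hm
    rcases hx with (⟨p, ⟨⟨h1, h2⟩, _⟩, hxe⟩ | ⟨p, ⟨⟨h1, h2⟩, _⟩, hxe⟩) | ⟨p, hp, hxe⟩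
    · subst hxe
      have := Nat.dvd_sub (hsum p.2 h2 t0 ht0) (hsum p.1 h1 t0 ht0)
      simpa [Nat.add_sub_add_right] using this
    · subst hxe
      have := Nat.dvd_sub (hsum s0 hs0 p.2 h2) (hsum s0 hs0 p.1 h1)
      simpa [Nat.add_sub_add_left] using this
    · subst hxe
      exact hsum p.1 hp.1 p.2 hp.2
end

section
/- Let D be the Toeplitz digraph of T_n⟨S;T⟩ and let d = gcd{s + t : s ∈ S, t ∈ T}. If two vertices u and v are adjacent in the m-step competition graph C^m(D) for some positive integer m, then d divides u − v. -/
/-- The Toeplitz digraph of `T_n⟨S;T⟩`: vertices are integers in `[1, n]`, and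
there is an arc `(u, v)` iff `v − u ∈ S` or `u − v ∈ T`. -/
def ToepArc (n : ℕ) (S T : Finset ℕ) (u v : ℤ) : Prop :=
  u ∈ Finset.Icc (1 : ℤ) (n : ℤ) ∧ v ∈ Finset.Icc (1 : ℤ) (n : ℤ) ∧
    ((∃ s ∈ S, v = u + (s : ℤ)) ∨ (∃ t ∈ T, v = u - (t : ℤ)))

/-- There is a directed `(u,v)`-walk of length `m` in the Toeplitz digraph. -/
def HasWalk (n : ℕ) (S T : Finset ℕ) (m : ℕ) (u v : ℤ) : Prop :=
  ∃ w : ℕ → ℤ, w 0 = u ∧ w m = v ∧ ∀ i < m, ToepArc n S T (w i) (w (i + 1))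

/-- `u` and `v` are adjacent in the `m`-step competition graph `C^m(D)`. -/
def CompAdj (n : ℕ) (S T : Finset ℕ) (m : ℕ) (u v : ℤ) : Prop :=
  u ≠ v ∧ ∃ x : ℤ, HasWalk n S T m u x ∧ HasWalk n S T m v x

/-- If `u` and `v` are adjacent in `C^m(D)` for some positive `m`,
then `d = gcd{s + t : s ∈ S, t ∈ T}` divides `u − v`. -/
theorem compAdj_dvd_sub (n : ℕ) (hn : 2 ≤ n) (S T : Finset ℕ)
    (hS : S.Nonempty) (hT : T.Nonempty)
    (hSsub : S ⊆ Finset.Icc 1 (n - 1)) (hTsub : T ⊆ Finset.Icc 1 (n - 1))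
    (d : ℕ) (hd : d = (S ×ˢ T).gcd (fun p => p.1 + p.2))
    (m : ℕ) (hm : 0 < m) (u v : ℤ)
    (hu : u ∈ Finset.Icc (1 : ℤ) (n : ℤ)) (hv : v ∈ Finset.Icc (1 : ℤ) (n : ℤ))
    (hadj : CompAdj n S T m u v) :
    (d : ℤ) ∣ u - v := by
  obtain ⟨s₀, hs₀⟩ := hS
  obtain ⟨t₀, ht₀⟩ := hT
  have hgcd : ∀ s ∈ S, ∀ t ∈ T, (d : ℤ) ∣ (s : ℤ) + t := by
    intro s hs t ht
    have : d ∣ s + t := by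
      rw [hd]
      exact Finset.gcd_dvd (Finset.mk_mem_product hs ht)
    exact_mod_cast this
  have hstep : ∀ a b : ℤ,
      ((∃ s ∈ S, b = a + (s : ℤ)) ∨ (∃ t ∈ T, b = a - (t : ℤ))) →
      (d : ℤ) ∣ b - a - (s₀ : ℤ) := by
    rintro a b (⟨s, hs, rfl⟩ | ⟨t, ht, rfl⟩)
    · have h1 := hgcd s hs t₀ ht₀
      have h2 := hgcd s₀ hs₀ t₀ ht₀
      have : (d : ℤ) ∣ ((s : ℤ) + t₀) - ((s₀ : ℤ) + t₀) := dvd_sub h1 h2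
      have heq : a + (s : ℤ) - a - s₀ = ((s : ℤ) + t₀) - ((s₀ : ℤ) + t₀) := by ring
      rwa [heq]
    · have h2 := hgcd s₀ hs₀ t ht
      have : (d : ℤ) ∣ -((s₀ : ℤ) + t) := dvd_neg.2 h2
      have heq : a - (t : ℤ) - a - s₀ = -((s₀ : ℤ) + t) := by ring
      rwa [heq]
  have hwalk : ∀ k : ℕ, ∀ a x : ℤ, HasWalk n S T k a x →
      (d : ℤ) ∣ x - a - k * (s₀ : ℤ) := by
    intro k
    induction k with
    | zero =>
      rintro a x ⟨w, h0, hk, _⟩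
      subst h0; subst hk
      simp
    | succ k ih =>
      rintro a x ⟨w, h0, hk, harc⟩
      have h1 : HasWalk n S T k a (w k) :=
        ⟨w, h0, rfl, fun i hi => harc i (by omega)⟩
      have hd1 := ih a (w k) h1
      have harc' := (harc k (by omega)).2.2
      have hd2 : (d : ℤ) ∣ w (k + 1) - w k - (s₀ : ℤ) := hstep _ _ harc'
      have := dvd_add hd1 hd2
      have heq : x - a - (↑(k + 1) : ℕ) * (s₀ : ℤ) =
          (w k - a - k * (s₀ : ℤ)) + (w (k + 1) - w k - (s₀ : ℤ)) := by
        rw [← hk]; push_cast; ring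
      rwa [heq]
  obtain ⟨_, x, hw1, hw2⟩ := hadj
  have h1 := hwalk m u x hw1
  have h2 := hwalk m v x hw2
  have := dvd_sub h2 h1
  have heq : (x - v - m * (s₀ : ℤ)) - (x - u - m * (s₀ : ℤ)) = u - v := by ring
  rwa [heq] at this
end

section
/- Let D be the Toeplitz digraph of T_n⟨S;T⟩ with max S + min T ≤ n and min S + max T ≤ n, let d = gcd{s + t : s ∈ S, t ∈ T} and d' = gcd(d, min S). Then d/d' is the smallest positive integer p with the following property: there exists a positive integer M such that for every integer m ≥ M and all vertices u, v of D, there is a directed (u,v)-walk of length m in D if and only if there is a directed (u,v)-walk of length m + p in D. (That is, the matrix period of T_n⟨S;T⟩ is d/d'.) -/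
lemma hasWalk_zero (n : ℕ) (S T : Finset ℕ) (u : ℤ) : HasWalk n S T 0 u u :=
  ⟨fun _ => u, rfl, rfl, fun i hi => absurd hi (Nat.not_lt_zero i)⟩

lemma hasWalk_one {n : ℕ} {S T : Finset ℕ} {u v : ℤ} (h : ToepArc n S T u v) :
    HasWalk n S T 1 u v := by
  refine ⟨fun i => if i = 0 then u else v, by simp, by simp, ?_⟩
  intro i hi
  interval_cases i
  simpa using h

lemma hasWalk_trans {n : ℕ} {S T : Finset ℕ} {m1 m2 : ℕ} {u w v : ℤ}
    (h1 : HasWalk n S T m1 u w) (h2 : HasWalk n S T m2 w v) :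
    HasWalk n S T (m1 + m2) u v := by
  obtain ⟨f, hf0, hfm, hfa⟩ := h1
  obtain ⟨g, hg0, hgm, hga⟩ := h2
  refine ⟨fun i => if i ≤ m1 then f i else g (i - m1), by simp [hf0], ?_, ?_⟩
  · by_cases h : m1 + m2 ≤ m1
    · have : m2 = 0 := by omega
      simp only [if_pos h]
      rw [show m1 + m2 = m1 by omega, hfm, ← hg0]
      rw [this] at hgm
      exact hgm
    · simp only [if_neg h]
      rw [show m1 + m2 - m1 = m2 by omega, hgm]
  · intro i hi
    by_cases h : i + 1 ≤ m1
    · simp only [if_pos h, if_pos (by omega : i ≤ m1)]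
      exact hfa i (by omega)
    · by_cases h' : i ≤ m1
      · have hieq : i = m1 := by omega
        simp only [if_pos h', if_neg h]
        rw [hieq, hfm, show m1 + 1 - m1 = 1 by omega, ← hg0]
        exact hga 0 (by omega)
      · simp only [if_neg h, if_neg h']
        rw [show i + 1 - m1 = (i - m1) + 1 by omega]
        exact hga (i - m1) (by omega)

lemma hasWalk_congr {n : ℕ} {S T : Finset ℕ} {m m' : ℕ} {u v : ℤ}
    (h : HasWalk n S T m u v) (e : m = m') : HasWalk n S T m' u v := e ▸ h


lemma toeparc_def (n : ℕ) (S T : Finset ℕ) (u v : ℤ) : ToepArc n S T u v ↔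
  (u ∈ Finset.Icc (1 : ℤ) (n : ℤ) ∧ v ∈ Finset.Icc (1 : ℤ) (n : ℤ) ∧
    ((∃ s ∈ S, v = u + (s : ℤ)) ∨ (∃ t ∈ T, v = u - (t : ℤ)))) := Iff.rfl

lemma nav {n s0 t0 : ℕ} {S T : Finset ℕ} (hs0S : s0 ∈ S) (ht0T : t0 ∈ T)
    (hnst : s0 + t0 ≤ n) :
    ∀ (N a b : ℕ) (x y : ℤ), a + b = N → x ∈ Finset.Icc (1:ℤ) (n:ℤ) →
      y ∈ Finset.Icc (1:ℤ) (n:ℤ) → (a:ℤ)*s0 - (b:ℤ)*t0 = y - x →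
      HasWalk n S T (a+b) x y := by
  intro N
  induction N using Nat.strong_induction_on with
  | _ N ih =>
  intro a b x y hab hx hy heq
  have hx' := Finset.mem_Icc.1 hx
  have hy' := Finset.mem_Icc.1 hy
  have hstep_down : 1 ≤ b → (1:ℤ) ≤ x - t0 → HasWalk n S T (a+b) x y := by
    intro hb hx1
    have harc : ToepArc n S T x (x - t0) := by
      rw [toeparc_def]
      exact ⟨hx, Finset.mem_Icc.2 ⟨hx1, by omega⟩, Or.inr ⟨t0, ht0T, rfl⟩⟩
    have hrec : HasWalk n S T (a + (b-1)) (x - t0) y := by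
      apply ih (a + (b-1)) (by omega) a (b-1) (x - t0) y rfl
        (Finset.mem_Icc.2 ⟨hx1, by omega⟩) hy
      have : ((b-1:ℕ):ℤ) = (b:ℤ) - 1 := by omega
      rw [this]; ring_nf; ring_nf at heq; linarith
    exact hasWalk_congr (hasWalk_trans (hasWalk_one harc) hrec) (by omega)
  rcases Nat.eq_zero_or_pos a with ha | ha
  · rcases Nat.eq_zero_or_pos b with hb | hb
    · subst ha; subst hb
      have : x = y := by simp at heq; linarith
      subst this; exact hasWalk_zero n S T x
    · apply hstep_down hb
      have hbt : (t0:ℤ) ≤ (b:ℤ)*t0 := by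
        have h1 : (1:ℤ) ≤ (b:ℤ) := by exact_mod_cast hb
        nlinarith [Int.ofNat_nonneg t0]
      subst ha; simp at heq; omega
  · by_cases hup : x + s0 ≤ (n:ℤ)
    · -- step up
      have harc : ToepArc n S T x (x + s0) := by
        rw [toeparc_def]
        exact ⟨hx, Finset.mem_Icc.2 ⟨by omega, hup⟩, Or.inl ⟨s0, hs0S, rfl⟩⟩
      have hrec : HasWalk n S T ((a-1) + b) (x + s0) y := by
        apply ih ((a-1) + b) (by omega) (a-1) b (x + s0) y rfl
          (Finset.mem_Icc.2 ⟨by omega, hup⟩) hy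
        have : ((a-1:ℕ):ℤ) = (a:ℤ) - 1 := by omega
        rw [this]; ring_nf; ring_nf at heq; linarith
      exact hasWalk_congr (hasWalk_trans (hasWalk_one harc) hrec) (by omega)
    · rcases Nat.eq_zero_or_pos b with hb | hb
      · exfalso
        subst hb
        have has : (s0:ℤ) ≤ (a:ℤ)*s0 := by
          have h1 : (1:ℤ) ≤ (a:ℤ) := by exact_mod_cast ha
          nlinarith [Int.ofNat_nonneg s0]
        simp at heq
        have hst : (s0:ℤ) + t0 ≤ n := by exact_mod_cast hnst
        omega
      · apply hstep_down hb
        have hst : (s0:ℤ) + t0 ≤ n := by exact_mod_cast hnst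
        omega

lemma solve_nav {s0 t0 n : ℕ} (hs0 : 1 ≤ s0) (ht0 : 1 ≤ t0) (δ : ℤ)
    (hδ1 : -(n:ℤ) ≤ δ) (hδ2 : δ ≤ (n:ℤ)) (hdvd : ((Nat.gcd s0 t0 : ℕ):ℤ) ∣ δ) :
    ∃ a1 b1 : ℕ, (a1:ℤ)*(s0:ℤ) - (b1:ℤ)*(t0:ℤ) = δ ∧ a1 ≤ t0*(n+1) ∧
      b1 ≤ t0*(n+1)*s0 + n := by
  set g := Nat.gcd s0 t0 with hgdef
  have hg : 1 ≤ g := Nat.one_le_iff_ne_zero.2 (Nat.gcd_ne_zero_left (by omega))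
  obtain ⟨s', hs'⟩ : g ∣ s0 := Nat.gcd_dvd_left s0 t0
  obtain ⟨t', ht'⟩ : g ∣ t0 := Nat.gcd_dvd_right s0 t0
  have ht'1 : 1 ≤ t' := by nlinarith
  have hbez : (g:ℤ) = s0 * Nat.gcdA s0 t0 + t0 * Nat.gcdB s0 t0 := Nat.gcd_eq_gcd_ab s0 t0
  obtain ⟨e, he⟩ := hdvd
  set p := Nat.gcdA s0 t0
  set q := Nat.gcdB s0 t0
  set a1' := e * p with ha1'
  have hkey : a1' * s0 - δ = -(e*q) * t0 := by
    rw [he, hbez]; ring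
  set aZ := a1' % (t':ℤ) + (t':ℤ) * n with haZ
  have ht'pos : (0:ℤ) < (t':ℤ) := by exact_mod_cast ht'1
  have h1 : 0 ≤ a1' % (t':ℤ) := Int.emod_nonneg _ (by positivity)
  have h2 : a1' % (t':ℤ) < t' := Int.emod_lt_of_pos _ ht'pos
  obtain ⟨k, hk⟩ : (t':ℤ) ∣ aZ - a1' := by
    have : aZ - a1' = (a1' % t' - a1') + (t':ℤ)*n := by ring
    rw [this]
    refine dvd_add ?_ ⟨n, rfl⟩
    rw [Int.emod_def]
    exact ⟨-(a1' / t'), by ring⟩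
  set bZ := k * s' - e * q with hbZdef
  have ht0' : (t0:ℤ) = (g:ℤ) * t' := by exact_mod_cast ht'
  have hs0' : (s0:ℤ) = (g:ℤ) * s' := by exact_mod_cast hs'
  have hbZ : aZ * s0 - δ = (t0:ℤ) * bZ := by
    have : aZ * s0 - δ = (aZ - a1') * s0 + (a1' * s0 - δ) := by ring
    rw [this, hk, hkey, hbZdef, ht0', hs0']; ring
  have haZnn : (0:ℤ) ≤ aZ := by positivity
  have hnn : (0:ℤ) ≤ (n:ℤ) := Int.ofNat_nonneg n
  have haZn : (n:ℤ) ≤ aZ := by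
    have : (n:ℤ) ≤ (t':ℤ) * n := le_mul_of_one_le_left hnn (by exact_mod_cast ht'1)
    linarith
  have hs0Z : (1:ℤ) ≤ (s0:ℤ) := by exact_mod_cast hs0
  have ht0Z : (1:ℤ) ≤ (t0:ℤ) := by exact_mod_cast ht0
  have haZs0 : aZ ≤ aZ * s0 := le_mul_of_one_le_right haZnn hs0Z
  have hbZt0nn : (0:ℤ) ≤ bZ * t0 := by linarith [hbZ]
  have hbZnn : (0:ℤ) ≤ bZ := by nlinarith [hbZt0nn, ht0Z]
  have ht't0 : (t':ℤ) ≤ t0 := by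
    have hg1 : (1:ℤ) ≤ (g:ℤ) := by exact_mod_cast hg
    have : (t':ℤ) ≤ (g:ℤ) * t' := le_mul_of_one_le_left (by linarith) hg1
    linarith [ht0']
  have haZub : aZ ≤ (t0:ℤ)*(n+1) := by
    have h3 : aZ ≤ (t':ℤ)*(n+1) - 1 := by
      have : (t':ℤ)*(n+1) = t' + t'*n := by ring
      linarith
    have h4 : (t':ℤ)*(n+1) ≤ (t0:ℤ)*(n+1) :=
      mul_le_mul_of_nonneg_right ht't0 (by linarith)
    linarith
  have hbZub : bZ ≤ (t0:ℤ)*(n+1)*s0 + n := by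
    have h5 : bZ ≤ bZ * t0 := le_mul_of_one_le_right hbZnn ht0Z
    have h6 : aZ * s0 ≤ (t0:ℤ)*(n+1)*s0 :=
      mul_le_mul_of_nonneg_right haZub (by linarith)
    linarith [hbZ]
  refine ⟨aZ.toNat, bZ.toNat, ?_, ?_, ?_⟩
  · rw [Int.toNat_of_nonneg haZnn, Int.toNat_of_nonneg hbZnn]; linarith [hbZ]
  · have : ((t0*(n+1) : ℕ) : ℤ) = (t0:ℤ)*(n+1) := by push_cast; ring
    omega
  · have : ((t0*(n+1)*s0 + n : ℕ) : ℤ) = (t0:ℤ)*(n+1)*s0 + n := by push_cast; ring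
    omega

lemma pair_pos {n s t s0 t0 : ℕ} (hs0 : 1 ≤ s0) (ht0 : 1 ≤ t0)
    (hst0 : s + t0 ≤ n) (hs0t : s0 + t ≤ n) (u : ℤ) :
    ∃ x : ℤ, ((Nat.gcd s0 t0 : ℕ):ℤ) ∣ (x - u) ∧ 1 ≤ x ∧ x + s ≤ (n:ℤ) ∧
      1 ≤ x + s - t := by
  set g := Nat.gcd s0 t0 with hgdef
  have hg1 : 1 ≤ g := Nat.one_le_iff_ne_zero.2 (Nat.gcd_ne_zero_left (by omega))
  have hgs0 : g ≤ s0 := Nat.le_of_dvd (by omega) (Nat.gcd_dvd_left _ _)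
  have hgt0 : g ≤ t0 := Nat.le_of_dvd (by omega) (Nat.gcd_dvd_right _ _)
  set A := max 1 ((t:ℤ) - s + 1) with hA
  have hgZ : (0:ℤ) < (g:ℤ) := by exact_mod_cast hg1
  set x := A + (u - A) % (g:ℤ) with hx
  have h1 : 0 ≤ (u - A) % (g:ℤ) := Int.emod_nonneg _ (by positivity)
  have h2 : (u - A) % (g:ℤ) < g := Int.emod_lt_of_pos _ hgZ
  refine ⟨x, ?_, ?_, ?_, ?_⟩
  · have : x - u = (u - A) % (g:ℤ) - (u - A) := by rw [hx]; ring
    rw [this, Int.emod_def]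
    exact ⟨-((u-A)/g), by ring⟩
  · have : (1:ℤ) ≤ A := le_max_left _ _
    linarith
  · have hxub : x ≤ A + g - 1 := by linarith
    rcases le_total ((t:ℤ) - s + 1) 1 with hc | hc
    · have hA1 : A = 1 := by rw [hA]; exact max_eq_left hc
      have : (s:ℤ) + t0 ≤ n := by exact_mod_cast hst0
      have : (g:ℤ) ≤ t0 := by exact_mod_cast hgt0
      linarith
    · have hA1 : A = (t:ℤ) - s + 1 := by rw [hA]; exact max_eq_right hc
      have : (s0:ℤ) + t ≤ n := by exact_mod_cast hs0t
      have : (g:ℤ) ≤ s0 := by exact_mod_cast hgs0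
      linarith
  · have : (t:ℤ) - s + 1 ≤ A := le_max_right _ _
    linarith

lemma chain {n s0 t0 : ℕ} {S T : Finset ℕ} (hs0S : s0 ∈ S) (ht0T : t0 ∈ T)
    (hs0 : 1 ≤ s0) (ht0 : 1 ≤ t0)
    (hS1 : ∀ s ∈ S, 1 ≤ s) (hSn : ∀ s ∈ S, s + t0 ≤ n) (hTn : ∀ t ∈ T, s0 + t ≤ n)
    (L : Multiset (ℕ × ℕ)) :
    (∀ p ∈ L, p.1 ∈ S ∧ p.2 ∈ T) →
    ∀ (u v : ℤ) (a b : ℕ), u ∈ Finset.Icc (1:ℤ) (n:ℤ) → v ∈ Finset.Icc (1:ℤ) (n:ℤ) →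
    (t0*(n+1) + (t0*(n+1)*s0 + n)) * Multiset.card L ≤ a →
    (t0*(n+1) + (t0*(n+1)*s0 + n)) * Multiset.card L ≤ b →
    ((a:ℤ)*(s0:ℤ) - (b:ℤ)*(t0:ℤ) = v - u - (L.map (fun p => (p.1:ℤ) - (p.2:ℤ))).sum) →
    HasWalk n S T (a + b + 2 * Multiset.card L) u v := by
  have hnst : s0 + t0 ≤ n := hSn s0 hs0S
  induction L using Multiset.induction_on with
  | empty =>
    intro _ u v a b hu hv _ _ heq
    have := nav (n := n) hs0S ht0T hnst (a+b) a b u v rfl hu hv (by simpa using heq)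
    simpa using this
  | cons p K ihK =>
    obtain ⟨s, t⟩ := p
    intro hL u v a b hu hv hca hcb heq
    have hsS : s ∈ S := (hL (s,t) (Multiset.mem_cons_self _ _)).1
    have htT : t ∈ T := (hL (s,t) (Multiset.mem_cons_self _ _)).2
    obtain ⟨x, hxdvd, hx1, hxsn, hxst⟩ :=
      pair_pos (n := n) (s := s) (t := t) hs0 ht0 (hSn s hsS) (hTn t htT) u
    have hu' := Finset.mem_Icc.1 hu
    have hv' := Finset.mem_Icc.1 hv
    have hs1 : (1:ℤ) ≤ (s:ℤ) := by exact_mod_cast hS1 s hsS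
    have hxn : x ≤ (n:ℤ) := by linarith
    have hxIcc : x ∈ Finset.Icc (1:ℤ) (n:ℤ) := Finset.mem_Icc.2 ⟨hx1, hxn⟩
    obtain ⟨a1, b1, heq1, ha1, hb1⟩ := solve_nav (n := n) hs0 ht0 (x - u)
      (by linarith) (by linarith) hxdvd
    -- walk from u to x
    have walk1 : HasWalk n S T (a1 + b1) u x :=
      nav hs0S ht0T hnst (a1+b1) a1 b1 u x rfl hu hxIcc heq1
    -- the pair arcs
    have hxsIcc : x + s ∈ Finset.Icc (1:ℤ) (n:ℤ) := Finset.mem_Icc.2 ⟨by linarith, hxsn⟩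
    have htnn : (0:ℤ) ≤ (t:ℤ) := Int.ofNat_nonneg t
    have hxstIcc : x + s - t ∈ Finset.Icc (1:ℤ) (n:ℤ) :=
      Finset.mem_Icc.2 ⟨hxst, by linarith⟩
    have arc1 : HasWalk n S T 1 x (x + s) :=
      hasWalk_one ((toeparc_def ..).2 ⟨hxIcc, hxsIcc, Or.inl ⟨s, hsS, rfl⟩⟩)
    have arc2 : HasWalk n S T 1 (x + s) (x + s - t) :=
      hasWalk_one ((toeparc_def ..).2 ⟨hxsIcc, hxstIcc, Or.inr ⟨t, htT, rfl⟩⟩)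
    -- recursion
    set C := t0*(n+1) + (t0*(n+1)*s0 + n) with hC
    have hcardK : Multiset.card ((s,t) ::ₘ K) = Multiset.card K + 1 := by simp
    have ha1C : a1 ≤ C := by omega
    have hb1C : b1 ≤ C := by omega
    have hCmul : C * 1 ≤ C * (Multiset.card K + 1) :=
      Nat.mul_le_mul_left C (by omega)
    have ha1a : a1 ≤ a := by rw [hcardK] at hca; omega
    have hb1b : b1 ≤ b := by rw [hcardK] at hcb; omega
    have hsum : (((s,t) ::ₘ K).map (fun p => (p.1:ℤ) - (p.2:ℤ))).sum
        = ((s:ℤ) - (t:ℤ)) + (K.map (fun p => (p.1:ℤ) - (p.2:ℤ))).sum := by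
      simp
    have rec1 : HasWalk n S T ((a - a1) + (b - b1) + 2 * Multiset.card K) (x + s - t) v := by
      apply ihK (fun p hp => hL p (Multiset.mem_cons_of_mem hp)) (x+s-t) v (a-a1) (b-b1)
        hxstIcc hv ?_ ?_ ?_
      · rw [hcardK, Nat.mul_add] at hca; omega
      · rw [hcardK, Nat.mul_add] at hcb; omega
      · have hca' : ((a - a1 : ℕ) : ℤ) = (a:ℤ) - a1 := by omega
        have hcb' : ((b - b1 : ℕ) : ℤ) = (b:ℤ) - b1 := by omega
        have heq' : (a:ℤ)*(s0:ℤ) - (b:ℤ)*(t0:ℤ)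
            = v - u - (((s:ℤ) - (t:ℤ)) + (K.map (fun p => (p.1:ℤ) - (p.2:ℤ))).sum) := by
          rw [hsum] at heq; exact heq
        rw [hca', hcb', sub_mul, sub_mul]
        linarith [heq', heq1]
    have total := hasWalk_trans walk1 (hasWalk_trans arc1 (hasWalk_trans arc2 rec1))
    apply hasWalk_congr total
    rw [hcardK]
    omega

lemma bezout_finset {β : Type*} [DecidableEq β] (F : Finset β) (f : β → ℤ) :
    ∃ c : β → ℤ, ∑ x ∈ F, c x * f x = F.gcd f := by
  induction F using Finset.induction_on with
  | empty => exact ⟨fun _ => 0, by simp⟩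
  | insert _ _ ha =>
    rename_i a F' ih
    obtain ⟨c, hc⟩ := ih
    set A := Int.gcdA (f a) (F'.gcd f)
    set B := Int.gcdB (f a) (F'.gcd f)
    refine ⟨fun x => if x = a then A else B * c x, ?_⟩
    rw [Finset.sum_insert ha, Finset.gcd_insert]
    have h2 : ∑ x ∈ F', (if x = a then A else B * c x) * f x
        = B * ∑ x ∈ F', c x * f x := by
      rw [Finset.mul_sum]
      apply Finset.sum_congr rfl
      intro x hx
      rw [if_neg (by rintro rfl; exact ha hx)]
      ring
    beta_reduce
    rw [if_pos rfl, h2, hc]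
    have := Int.gcd_eq_gcd_ab (f a) (F'.gcd f)
    have hgg : (GCDMonoid.gcd (f a) (F'.gcd f) : ℤ) = (Int.gcd (f a) (F'.gcd f) : ℤ) := by
      rw [Int.coe_gcd]
    rw [hgg, this]
    ring

lemma suff {n : ℕ} {S T : Finset ℕ} {s0 t0 d : ℕ}
    (hs0S : s0 ∈ S) (ht0T : t0 ∈ T) (hs0 : 1 ≤ s0) (ht0 : 1 ≤ t0)
    (hS1 : ∀ s ∈ S, 1 ≤ s) (hT1 : ∀ t ∈ T, 1 ≤ t)
    (hSn : ∀ s ∈ S, s + t0 ≤ n) (hTn : ∀ t ∈ T, s0 + t ≤ n)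
    (hd : d = (S ×ˢ T).gcd (fun p => p.1 + p.2)) :
    ∃ M : ℕ, 0 < M ∧ ∀ m : ℕ, M ≤ m → ∀ u ∈ Finset.Icc (1:ℤ) (n:ℤ),
      ∀ v ∈ Finset.Icc (1:ℤ) (n:ℤ),
      (d:ℤ) ∣ (v - u - (m:ℤ)*(s0:ℤ)) → HasWalk n S T m u v := by
  classical
  set F := S ×ˢ T with hF
  set α : ℕ × ℕ → ℤ := fun p => (p.1:ℤ) + 2*(t0:ℤ) - (p.2:ℤ) with hα
  set σ : ℕ := s0 + t0 with hσ
  -- d divides everything relevant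
  have hdst : ∀ p ∈ F, (d:ℤ) ∣ ((p.1:ℤ) + (p.2:ℤ)) := by
    intro p hp
    have : d ∣ p.1 + p.2 := hd ▸ Finset.gcd_dvd hp
    exact_mod_cast Int.natCast_dvd_natCast.2 this
  have hmemF : ∀ s ∈ S, ∀ t ∈ T, (s, t) ∈ F := by
    intro s hs t ht; rw [hF, Finset.mem_product]; exact ⟨hs, ht⟩
  have hdσ : (d:ℤ) ∣ (σ:ℤ) := by
    have := hdst (s0, t0) (hmemF s0 hs0S t0 ht0T)
    simpa [hσ] using this
  have hdα : ∀ p ∈ F, (d:ℤ) ∣ α p := by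
    intro p hp
    rw [hF, Finset.mem_product] at hp
    have h1 := hdst (p.1, t0) (hmemF p.1 hp.1 t0 ht0T)
    have h2 := hdst (s0, p.2) (hmemF s0 hs0S p.2 hp.2)
    have : α p = ((p.1:ℤ) + t0) + ((s0:ℤ) + t0) - ((s0:ℤ) + p.2) := by rw [hα]; ring
    rw [this]
    push_cast at hdσ ⊢
    exact dvd_sub (dvd_add h1 (by exact_mod_cast hdσ)) h2
  -- the gcd of the α's together with σ is d
  obtain ⟨z, hz⟩ := bezout_finset F α
  set G : ℤ := F.gcd α with hG
  set e : ℕ := Int.gcd G (σ:ℤ) with he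
  have hdG : (d:ℤ) ∣ G := Finset.dvd_gcd hdα
  have hde : (d:ℤ) ∣ (e:ℤ) := Int.dvd_coe_gcd hdG hdσ
  have hed : e ∣ d := by
    rw [hd]
    apply Finset.dvd_gcd
    intro p hp
    have hp' := Finset.mem_product.1 hp
    have heG : (e:ℤ) ∣ G := Int.gcd_dvd_left G (σ:ℤ)
    have heσ : (e:ℤ) ∣ (σ:ℤ) := Int.gcd_dvd_right G (σ:ℤ)
    have h1 : (e:ℤ) ∣ α p := heG.trans (Finset.gcd_dvd hp)
    have h2 : (e:ℤ) ∣ α (s0, p.2) :=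
      heG.trans (Finset.gcd_dvd (hmemF s0 hs0S p.2 hp'.2))
    have hkey : ((p.1 + p.2 : ℕ):ℤ) = α p + 2*(σ:ℤ) - 2 * α (s0, p.2) := by
      rw [hα]; push_cast [hσ]; ring
    have : (e:ℤ) ∣ ((p.1 + p.2 : ℕ):ℤ) := by
      rw [hkey]
      exact dvd_sub (dvd_add h1 (heσ.mul_left 2)) (h2.mul_left 2)
    exact_mod_cast this
  have hedeq : e = d := Nat.dvd_antisymm hed (by exact_mod_cast hde)
  -- Bezout for d in terms of G and σ
  have hbez2 : (d:ℤ) = G * Int.gcdA G (σ:ℤ) + (σ:ℤ) * Int.gcdB G (σ:ℤ) := by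
    rw [← hedeq, he]
    exact Int.gcd_eq_gcd_ab G (σ:ℤ)
  -- constants
  set Cn : ℕ := t0*(n+1) + (t0*(n+1)*s0 + n) with hCn
  set Kn : ℕ := F.card * σ with hKn
  set Mn : ℕ := 2*Kn*σ + n + 3*n*F.card*σ + Cn*Kn*σ + n + 1 with hMn
  have hσ2 : 2 ≤ σ := by omega
  have hσpos : (0:ℤ) < (σ:ℤ) := by exact_mod_cast (by omega : 0 < σ)
  refine ⟨Mn, by omega, ?_⟩
  intro m hm u hu v hv hcong
  have hu' := Finset.mem_Icc.1 hu
  have hv' := Finset.mem_Icc.1 hv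
  have hQd : (d:ℤ) ∣ (v - u + (m:ℤ)*(t0:ℤ)) := by
    have hrw : v - u + (m:ℤ)*(t0:ℤ) = (v - u - (m:ℤ)*(s0:ℤ)) + (m:ℤ)*(σ:ℤ) := by
      push_cast [hσ]; ring
    rw [hrw]
    exact dvd_add hcong (Dvd.dvd.mul_left hdσ (m:ℤ))
  obtain ⟨Q, hQ⟩ := hQd
  set A2 : ℤ := Int.gcdA G (σ:ℤ) with hA2
  set B2 : ℤ := Int.gcdB G (σ:ℤ) with hB2
  set c : ℕ × ℕ → ℤ := fun p => (Q * A2 * z p) % (σ:ℤ) with hc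
  have hc0 : ∀ p, 0 ≤ c p := fun p => Int.emod_nonneg _ hσpos.ne'
  have hc1 : ∀ p, c p < (σ:ℤ) := fun p => Int.emod_lt_of_pos _ hσpos
  have hSig : ∑ p ∈ F, (Q * A2 * z p) * α p = Q * A2 * G := by
    rw [← hz, Finset.mul_sum]
    exact Finset.sum_congr rfl fun p _ => by ring
  obtain ⟨aZ, haZ⟩ : (σ:ℤ) ∣ (v - u + (m:ℤ)*(t0:ℤ) - ∑ p ∈ F, c p * α p) := by
    have hsplit : v - u + (m:ℤ)*(t0:ℤ) - ∑ p ∈ F, c p * α p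
        = ((∑ p ∈ F, (Q * A2 * z p) * α p) - ∑ p ∈ F, c p * α p) + (σ:ℤ)*(Q*B2) := by
      rw [hSig]
      have : v - u + (m:ℤ)*(t0:ℤ) = Q * A2 * G + (σ:ℤ)*(Q*B2) := by
        rw [hQ, hbez2]; ring
      linarith [this]
    rw [hsplit]
    refine dvd_add ?_ ⟨Q*B2, rfl⟩
    rw [← Finset.sum_sub_distrib]
    apply Finset.dvd_sum
    intro p _
    have : (Q * A2 * z p) * α p - c p * α p = ((Q * A2 * z p) - c p) * α p := by ring
    rw [this]
    apply Dvd.dvd.mul_right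
    have hmd := Int.emod_def (Q * A2 * z p) (σ:ℤ)
    exact ⟨(Q * A2 * z p) / (σ:ℤ), by rw [hc]; simp only []; linarith [hmd]⟩
  set k : ℕ := ∑ p ∈ F, (c p).toNat with hk
  have hkc : (k:ℤ) = ∑ p ∈ F, c p := by
    rw [hk]
    push_cast
    exact Finset.sum_congr rfl fun p _ => Int.toNat_of_nonneg (hc0 p)
  have hkK : k ≤ Kn := by
    rw [hk, hKn]
    calc ∑ p ∈ F, (c p).toNat ≤ ∑ p ∈ F, σ := by
          apply Finset.sum_le_sum
          intro p _
          have := hc0 p; have := hc1 p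
          omega
      _ = F.card * σ := by rw [Finset.sum_const, smul_eq_mul]
  -- bound on the alpha-sum
  have hnt0 : t0 ≤ n := by have := hSn s0 hs0S; omega
  have hαbound : ∀ p ∈ F, |α p| ≤ 3*(n:ℤ) := by
    intro p hp
    have hp' := Finset.mem_product.1 hp
    have h1 : p.1 ≤ n := by have := hSn p.1 hp'.1; omega
    have h2 : p.2 ≤ n := by have := hTn p.2 hp'.2; omega
    rw [hα, abs_le]
    constructor
    · simp only []
      have : ((p.2:ℕ):ℤ) ≤ n := by exact_mod_cast h2
      have h0 : (0:ℤ) ≤ (p.1:ℤ) := Int.ofNat_nonneg _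
      have h0' : (0:ℤ) ≤ (t0:ℤ) := Int.ofNat_nonneg _
      linarith
    · simp only []
      have : ((p.1:ℕ):ℤ) ≤ n := by exact_mod_cast h1
      have h2' : ((t0:ℕ):ℤ) ≤ n := by exact_mod_cast hnt0
      have h0 : (0:ℤ) ≤ (p.2:ℤ) := Int.ofNat_nonneg _
      linarith
  have hSgbound : |∑ p ∈ F, c p * α p| ≤ (F.card : ℤ) * ((σ:ℤ) * (3*(n:ℤ))) := by
    refine (Finset.abs_sum_le_sum_abs _ _).trans ?_
    have : ∀ p ∈ F, |c p * α p| ≤ (σ:ℤ) * (3*(n:ℤ)) := by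
      intro p hp
      rw [abs_mul]
      have h1 : |c p| ≤ (σ:ℤ) := by
        rw [abs_of_nonneg (hc0 p)]; exact (hc1 p).le
      exact mul_le_mul h1 (hαbound p hp) (abs_nonneg _) (le_of_lt hσpos)
    calc ∑ p ∈ F, |c p * α p| ≤ ∑ p ∈ F, (σ:ℤ) * (3*(n:ℤ)) := Finset.sum_le_sum this
      _ = (F.card : ℤ) * ((σ:ℤ) * (3*(n:ℤ))) := by rw [Finset.sum_const, nsmul_eq_mul]
  -- casts of constants
  have hmM : (Mn:ℤ) ≤ (m:ℤ) := by exact_mod_cast hm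
  have hMncast : (Mn:ℤ) = 2*(Kn:ℤ)*(σ:ℤ) + (n:ℤ) + 3*(n:ℤ)*(F.card:ℤ)*(σ:ℤ)
      + ((Cn*Kn : ℕ):ℤ)*(σ:ℤ) + (n:ℤ) + 1 := by
    rw [hMn]; push_cast; ring
  have hmt0 : (m:ℤ) ≤ (m:ℤ)*(t0:ℤ) :=
    le_mul_of_one_le_right (Int.ofNat_nonneg m) (by exact_mod_cast ht0)
  have hms0 : (m:ℤ) ≤ (m:ℤ)*(s0:ℤ) :=
    le_mul_of_one_le_right (Int.ofNat_nonneg m) (by exact_mod_cast hs0)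
  have hSgb1 : ∑ p ∈ F, c p * α p ≤ 3*(n:ℤ)*(F.card:ℤ)*(σ:ℤ) := by
    have := (abs_le.1 hSgbound).2; linarith [this]
  have hSgb2 : -(3*(n:ℤ)*(F.card:ℤ)*(σ:ℤ)) ≤ ∑ p ∈ F, c p * α p := by
    have := (abs_le.1 hSgbound).1; linarith [this]
  -- lower bound for aZ
  have haZσ : aZ * (σ:ℤ) = v - u + (m:ℤ)*(t0:ℤ) - ∑ p ∈ F, c p * α p := by linarith [haZ]
  have hKnσnn : (0:ℤ) ≤ (Kn:ℤ)*(σ:ℤ) := mul_nonneg (Int.ofNat_nonneg Kn) (Int.ofNat_nonneg σ)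
  have hnnn : (0:ℤ) ≤ (n:ℤ) := Int.ofNat_nonneg n
  have haZlb : ((Cn*Kn : ℕ):ℤ) ≤ aZ := by
    have h1 : ((Cn*Kn : ℕ):ℤ)*(σ:ℤ) ≤ aZ * (σ:ℤ) := by
      rw [haZσ]
      linarith [hu'.1, hu'.2, hv'.1, hv'.2, hmM, hMncast, hmt0, hSgb1]
    exact le_of_mul_le_mul_right h1 hσpos
  set bZ : ℤ := (m:ℤ) - 2*(k:ℤ) - aZ with hbZ
  have hσcast : (σ:ℤ) = (s0:ℤ) + (t0:ℤ) := by rw [hσ]; push_cast; ring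
  have hbZσ : bZ * (σ:ℤ) = (m:ℤ)*(s0:ℤ) - 2*(k:ℤ)*(σ:ℤ) - (v - u)
      + ∑ p ∈ F, c p * α p := by
    have : bZ * (σ:ℤ) = (m:ℤ)*(σ:ℤ) - 2*(k:ℤ)*(σ:ℤ) - aZ*(σ:ℤ) := by rw [hbZ]; ring
    rw [this, haZσ, hσcast]; ring
  have hkσ : (k:ℤ)*(σ:ℤ) ≤ (Kn:ℤ)*(σ:ℤ) :=
    mul_le_mul_of_nonneg_right (by exact_mod_cast hkK) (le_of_lt hσpos)
  have hbZlb : ((Cn*Kn : ℕ):ℤ) ≤ bZ := by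
    have h1 : ((Cn*Kn : ℕ):ℤ)*(σ:ℤ) ≤ bZ * (σ:ℤ) := by
      rw [hbZσ]
      linarith [hu'.1, hu'.2, hv'.1, hv'.2, hmM, hMncast, hms0, hSgb2, hkσ]
    exact le_of_mul_le_mul_right h1 hσpos
  have haZ0 : 0 ≤ aZ := le_trans (Int.ofNat_nonneg _) haZlb
  have hbZ0 : 0 ≤ bZ := le_trans (Int.ofNat_nonneg _) hbZlb
  -- the multiset of pairs
  set L : Multiset (ℕ × ℕ) := ∑ p ∈ F, Multiset.replicate (c p).toNat p with hL
  have hLfacts : ∀ (F' : Finset (ℕ × ℕ)),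
      Multiset.card (∑ p ∈ F', Multiset.replicate (c p).toNat p)
        = ∑ p ∈ F', (c p).toNat ∧
      ((∑ p ∈ F', Multiset.replicate (c p).toNat p).map
          (fun p => (p.1:ℤ) - (p.2:ℤ))).sum
        = ∑ p ∈ F', ((c p).toNat : ℤ) * ((p.1:ℤ) - (p.2:ℤ)) ∧
      ∀ q ∈ (∑ p ∈ F', Multiset.replicate (c p).toNat p), q ∈ F' := by
    intro F'
    induction F' using Finset.induction_on with
    | empty => refine ⟨by simp, by simp, by simp⟩
    | @insert q F'' hq ih =>
      rw [Finset.sum_insert hq, Finset.sum_insert hq, Finset.sum_insert hq]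
      refine ⟨?_, ?_, ?_⟩
      · rw [Multiset.card_add, Multiset.card_replicate, ih.1]
      · rw [Multiset.map_add, Multiset.sum_add, Multiset.map_replicate,
          Multiset.sum_replicate, ih.2.1, nsmul_eq_mul]
      · intro r hr
        rw [Multiset.mem_add] at hr
        rcases hr with hr | hr
        · have hrq := Multiset.eq_of_mem_replicate hr
          rw [hrq]; exact Finset.mem_insert_self q F''
        · exact Finset.mem_insert_of_mem (ih.2.2 r hr)
  have hLcard : Multiset.card L = k := by rw [hL, hk]; exact (hLfacts F).1
  have hLsum : (L.map (fun p => (p.1:ℤ) - (p.2:ℤ))).sum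
      = ∑ p ∈ F, c p * ((p.1:ℤ) - (p.2:ℤ)) := by
    rw [hL, (hLfacts F).2.1]
    exact Finset.sum_congr rfl fun p _ => by rw [Int.toNat_of_nonneg (hc0 p)]
  have hLmem : ∀ p ∈ L, p.1 ∈ S ∧ p.2 ∈ T := by
    intro p hp
    have := (hLfacts F).2.2 p (hL ▸ hp)
    exact Finset.mem_product.1 this
  -- apply chain
  set a : ℕ := aZ.toNat with ha
  set b : ℕ := bZ.toNat with hb
  have haZa : (a:ℤ) = aZ := Int.toNat_of_nonneg haZ0
  have hbZb : (b:ℤ) = bZ := Int.toNat_of_nonneg hbZ0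
  have hCk : Cn * k ≤ Cn * Kn := Nat.mul_le_mul_left Cn hkK
  have hca : Cn * Multiset.card L ≤ a := by
    rw [hLcard]
    have h1 : ((Cn*k : ℕ):ℤ) ≤ ((Cn*Kn : ℕ):ℤ) := by exact_mod_cast hCk
    have h2 : ((Cn*k : ℕ):ℤ) ≤ (a:ℤ) := le_trans h1 (haZa ▸ haZlb)
    exact_mod_cast h2
  have hcb : Cn * Multiset.card L ≤ b := by
    rw [hLcard]
    have h1 : ((Cn*k : ℕ):ℤ) ≤ ((Cn*Kn : ℕ):ℤ) := by exact_mod_cast hCk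
    have h2 : ((Cn*k : ℕ):ℤ) ≤ (b:ℤ) := le_trans h1 (hbZb ▸ hbZlb)
    exact_mod_cast h2
  have hsumαrel : ∑ p ∈ F, c p * α p
      = (∑ p ∈ F, c p * ((p.1:ℤ) - (p.2:ℤ))) + 2*(t0:ℤ)*(k:ℤ) := by
    rw [hkc, Finset.mul_sum, ← Finset.sum_add_distrib]
    exact Finset.sum_congr rfl fun p _ => by rw [hα]; ring
  have heqchain : (a:ℤ)*(s0:ℤ) - (b:ℤ)*(t0:ℤ)
      = v - u - (L.map (fun p => (p.1:ℤ) - (p.2:ℤ))).sum := by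
    rw [haZa, hbZb, hLsum]
    have h1 : aZ*(σ:ℤ) = aZ*(s0:ℤ) + aZ*(t0:ℤ) := by rw [hσcast]; ring
    have h2 : bZ*(t0:ℤ) = ((m:ℤ) - 2*(k:ℤ))*(t0:ℤ) - aZ*(t0:ℤ) := by rw [hbZ]; ring
    have h3 := hsumαrel
    have h4 := haZσ
    linarith [h1, h2, h3, h4]
  have := chain hs0S ht0T hs0 ht0 hS1 hSn hTn L hLmem u v a b hu hv hca hcb heqchain
  apply hasWalk_congr this
  have : (a:ℤ) + b + 2*(k:ℤ) = m := by rw [haZa, hbZb, hbZ]; ring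
  rw [hLcard]
  omega

lemma nec {n : ℕ} {S T : Finset ℕ} {s0 t0 d : ℕ} (hs0S : s0 ∈ S) (ht0T : t0 ∈ T)
    (hdst : ∀ s ∈ S, ∀ t ∈ T, (d:ℤ) ∣ ((s:ℤ) + (t:ℤ))) :
    ∀ m (u v : ℤ), HasWalk n S T m u v → (d:ℤ) ∣ (v - u - (m:ℤ)*(s0:ℤ)) := by
  intro m
  induction m with
  | zero =>
    rintro u v ⟨w, h0, hm, -⟩
    rw [← h0, ← hm]
    simp
  | succ m ih =>
    rintro u v ⟨w, h0, hm, ha⟩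
    have h1 : HasWalk n S T m u (w m) := ⟨w, h0, rfl, fun i hi => ha i (by omega)⟩
    have h2 := ih u (w m) h1
    obtain ⟨-, -, hor⟩ := ha m (by omega)
    rcases hor with ⟨s, hs, hval⟩ | ⟨t, ht, hval⟩
    · have hds : (d:ℤ) ∣ ((s:ℤ) - (s0:ℤ)) := by
        have := dvd_sub (hdst s hs t0 ht0T) (hdst s0 hs0S t0 ht0T)
        simpa using this
      have hrw : v - u - ((m+1:ℕ):ℤ)*(s0:ℤ)
          = (w m - u - (m:ℤ)*(s0:ℤ)) + ((s:ℤ) - (s0:ℤ)) := by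
        rw [← hm, hval]; push_cast; ring
      rw [hrw]; exact dvd_add h2 hds
    · have hds : (d:ℤ) ∣ (-((s0:ℤ) + (t:ℤ))) := (hdst s0 hs0S t ht).neg_right
      have hrw : v - u - ((m+1:ℕ):ℤ)*(s0:ℤ)
          = (w m - u - (m:ℤ)*(s0:ℤ)) + (-((s0:ℤ) + (t:ℤ))) := by
        rw [← hm, hval]; push_cast; ring
      rw [hrw]; exact dvd_add h2 hds

/-- If `max S + min T ≤ n` and `min S + max T ≤ n`, then the matrix
period of `T_n⟨S;T⟩` is `d/d'`, i.e. `d/d'` is the least positive `p` such that for all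
sufficiently large `m` and all vertices `u, v`, there is a directed `(u,v)`-walk of
length `m` iff there is one of length `m + p`. -/
theorem matrix_period_eq (n : ℕ) (hn : 2 ≤ n) (S T : Finset ℕ)
    (hS : S.Nonempty) (hT : T.Nonempty)
    (hSsub : S ⊆ Finset.Icc 1 (n - 1)) (hTsub : T ⊆ Finset.Icc 1 (n - 1))
    (hST1 : S.max' hS + T.min' hT ≤ n) (hST2 : S.min' hS + T.max' hT ≤ n)
    (d d' : ℕ) (hd : d = (S ×ˢ T).gcd (fun p => p.1 + p.2))
    (hd' : d' = Nat.gcd d (S.min' hS)) :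
    IsLeast {p : ℕ | 0 < p ∧ ∃ M : ℕ, 0 < M ∧ ∀ m : ℕ, M ≤ m →
        ∀ u ∈ Finset.Icc (1 : ℤ) (n : ℤ), ∀ v ∈ Finset.Icc (1 : ℤ) (n : ℤ),
          (HasWalk n S T m u v ↔ HasWalk n S T (m + p) u v)}
      (d / d') := by
  set s0 := S.min' hS with hs0def
  set t0 := T.min' hT with ht0def
  have hs0S : s0 ∈ S := S.min'_mem hS
  have ht0T : t0 ∈ T := T.min'_mem hT
  have hS1 : ∀ s ∈ S, 1 ≤ s := fun s hs => (Finset.mem_Icc.1 (hSsub hs)).1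
  have hT1 : ∀ t ∈ T, 1 ≤ t := fun t ht => (Finset.mem_Icc.1 (hTsub ht)).1
  have hs0 : 1 ≤ s0 := hS1 _ hs0S
  have ht0 : 1 ≤ t0 := hT1 _ ht0T
  have hSn : ∀ s ∈ S, s + t0 ≤ n := fun s hs =>
    le_trans (Nat.add_le_add_right (S.le_max' s hs) t0) hST1
  have hTn : ∀ t ∈ T, s0 + t ≤ n := fun t ht =>
    le_trans (Nat.add_le_add_left (T.le_max' t ht) s0) hST2
  have hdst : ∀ s ∈ S, ∀ t ∈ T, (d:ℤ) ∣ ((s:ℤ) + (t:ℤ)) := by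
    intro s hs t ht
    have hmem : (s, t) ∈ S ×ˢ T := Finset.mem_product.2 ⟨hs, ht⟩
    have : d ∣ s + t := hd ▸ Finset.gcd_dvd hmem
    exact_mod_cast Int.natCast_dvd_natCast.2 this
  have hdna : d ∣ s0 + t0 := by
    have := hdst s0 hs0S t0 ht0T
    exact_mod_cast this
  have hdpos : 0 < d := by
    rcases Nat.eq_zero_or_pos d with h | h
    · exfalso; have := Nat.eq_zero_of_zero_dvd (h ▸ hdna); omega
    · exact h
  have hd'pos : 0 < d' := hd' ▸ Nat.gcd_pos_of_pos_left s0 hdpos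
  set P := d / d' with hPdef
  have hd'd : d' ∣ d := hd' ▸ Nat.gcd_dvd_left d s0
  have hd's0 : d' ∣ s0 := hd' ▸ Nat.gcd_dvd_right d s0
  have hPmul : P * d' = d := Nat.div_mul_cancel hd'd
  have hPpos : 0 < P := Nat.div_pos (Nat.le_of_dvd hdpos hd'd) hd'pos
  obtain ⟨s1, hs1⟩ := hd's0
  have hdPs0 : d ∣ P * s0 := ⟨s1, by rw [hs1, ← hPmul]; ring⟩
  obtain ⟨M, hM0, hMsuff⟩ := suff hs0S ht0T hs0 ht0 hS1 hT1 hSn hTn hd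
  have h1Icc : (1:ℤ) ∈ Finset.Icc (1:ℤ) (n:ℤ) := by
    rw [Finset.mem_Icc]; constructor; omega; exact_mod_cast (by omega : 1 ≤ n)
  constructor
  · refine ⟨hPpos, M, hM0, ?_⟩
    intro m hm u hu v hv
    constructor
    · intro hw
      have hc := nec hs0S ht0T hdst m u v hw
      apply hMsuff (m + P) (by omega) u hu v hv
      have : v - u - ((m+P:ℕ):ℤ)*(s0:ℤ)
          = (v - u - (m:ℤ)*(s0:ℤ)) - ((P*s0 : ℕ):ℤ) := by push_cast; ring
      rw [this]
      exact dvd_sub hc (by exact_mod_cast Int.natCast_dvd_natCast.2 hdPs0)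
    · intro hw
      have hc := nec hs0S ht0T hdst (m+P) u v hw
      apply hMsuff m hm u hu v hv
      have : v - u - (m:ℤ)*(s0:ℤ)
          = (v - u - ((m+P:ℕ):ℤ)*(s0:ℤ)) + ((P*s0 : ℕ):ℤ) := by push_cast; ring
      rw [this]
      exact dvd_add hc (by exact_mod_cast Int.natCast_dvd_natCast.2 hdPs0)
  · rintro p ⟨hppos, Mp, hMp0, hprop⟩
    set m0 := P * (M + Mp) with hm0def
    have hm0M : M ≤ m0 := le_trans (by omega) (Nat.le_mul_of_pos_left (M+Mp) hPpos)
    have hm0Mp : Mp ≤ m0 := le_trans (by omega) (Nat.le_mul_of_pos_left (M+Mp) hPpos)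
    have hdm0 : d ∣ m0 * s0 := by
      have : m0 * s0 = (P * s0) * (M + Mp) := by rw [hm0def]; ring
      rw [this]
      exact hdPs0.mul_right _
    have walk0 : HasWalk n S T m0 1 1 := by
      apply hMsuff m0 hm0M 1 h1Icc 1 h1Icc
      have : (1:ℤ) - 1 - (m0:ℤ)*(s0:ℤ) = -((m0*s0 : ℕ):ℤ) := by push_cast; ring
      rw [this]
      exact ((by exact_mod_cast Int.natCast_dvd_natCast.2 hdm0 : (d:ℤ) ∣ ((m0*s0:ℕ):ℤ))).neg_right
    have walk1 : HasWalk n S T (m0 + p) 1 1 :=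
      (hprop m0 hm0Mp 1 h1Icc 1 h1Icc).1 walk0
    have hc2 := nec hs0S ht0T hdst (m0 + p) 1 1 walk1
    have hc1 := nec hs0S ht0T hdst m0 1 1 walk0
    have hdp : (d:ℤ) ∣ ((p * s0 : ℕ):ℤ) := by
      have hrw : ((p * s0 : ℕ):ℤ)
          = (1 - 1 - (m0:ℤ)*(s0:ℤ)) - (1 - 1 - ((m0+p:ℕ):ℤ)*(s0:ℤ)) := by push_cast; ring
      rw [hrw]
      exact dvd_sub hc1 hc2
    have hdpn : d ∣ p * s0 := by exact_mod_cast hdp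
    have hPp : P ∣ p := by
      have hcop : Nat.Coprime P (s0 / d') := by
        rw [hPdef, hd']
        exact Nat.coprime_div_gcd_div_gcd (hd' ▸ hd'pos)
      have hs1eq : s1 = s0 / d' := by
        rw [hs1]; rw [Nat.mul_div_cancel_left s1 hd'pos]
      have hPd'dvd : P * d' ∣ (p * s1) * d' := by
        rw [hPmul]
        have : (p * s1) * d' = p * (d' * s1) := by ring
        rw [this, ← hs1]
        exact hdpn
      have hPps1 : P ∣ p * s1 := (Nat.mul_dvd_mul_iff_right hd'pos).1 hPd'dvd
      exact (Nat.Coprime.dvd_of_dvd_mul_right (hs1eq ▸ hcop) hPps1)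
    exact Nat.le_of_dvd hppos hPp
end

section
/- Let D be the Toeplitz digraph of T_n⟨S;T⟩ with max S + min T ≤ n and min S + max T ≤ n. Then there exists a positive integer M such that for every integer m ≥ M, the m-step competition graph C^m(D) and the (m+1)-step competition graph C^{m+1}(D) have exactly the same adjacent pairs of vertices. (That is, the competition period of T_n⟨S;T⟩ is 1.) -/
/-- Every in-range vertex has an out-neighbor. -/
lemma toep_out (n : ℕ) (S T : Finset ℕ) (hS : S.Nonempty) (hT : T.Nonempty)
    (hSsub : S ⊆ Finset.Icc 1 (n - 1)) (hTsub : T ⊆ Finset.Icc 1 (n - 1))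
    (hST2 : S.min' hS + T.max' hT ≤ n)
    (x : ℤ) (hx : x ∈ Finset.Icc (1 : ℤ) (n : ℤ)) : ∃ y, ToepArc n S T x y := by
  have hsmem := S.min'_mem hS
  have htmem := T.min'_mem hT
  have hs := Finset.mem_Icc.mp (hSsub hsmem)
  have ht := Finset.mem_Icc.mp (hTsub htmem)
  have htle : T.min' hT ≤ T.max' hT := T.min'_le _ (T.max'_mem hT)
  have hst : S.min' hS + T.min' hT ≤ n := by omega
  rw [Finset.mem_Icc] at hx
  by_cases h : x + (S.min' hS : ℤ) ≤ n
  · refine ⟨x + (S.min' hS : ℤ), Finset.mem_Icc.mpr hx, Finset.mem_Icc.mpr ⟨by omega, h⟩,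
      Or.inl ⟨S.min' hS, hsmem, rfl⟩⟩
  · refine ⟨x - (T.min' hT : ℤ), Finset.mem_Icc.mpr hx, Finset.mem_Icc.mpr ⟨by omega, by omega⟩,
      Or.inr ⟨T.min' hT, htmem, rfl⟩⟩

lemma walk_end_mem {n : ℕ} {S T : Finset ℕ} {m : ℕ} {u x : ℤ} (hm : 1 ≤ m)
    (h : HasWalk n S T m u x) : x ∈ Finset.Icc (1 : ℤ) (n : ℤ) := by
  obtain ⟨w, h0, hm', harc⟩ := h
  have h1 := harc (m - 1) (by omega)
  rw [show m - 1 + 1 = m by omega] at h1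
  rw [← hm']
  exact h1.2.1

lemma walk_extend {n : ℕ} {S T : Finset ℕ} {m : ℕ} {u x y : ℤ}
    (h : HasWalk n S T m u x) (ha : ToepArc n S T x y) : HasWalk n S T (m + 1) u y := by
  obtain ⟨w, h0, hm, harc⟩ := h
  refine ⟨fun i => if i = m + 1 then y else w i, by simp [h0], by simp, ?_⟩
  intro i hi
  by_cases hi' : i = m
  · show ToepArc n S T (if i = m + 1 then y else w i) (if i + 1 = m + 1 then y else w (i + 1))
    rw [if_neg (by omega : i ≠ m + 1), if_pos (by omega : i + 1 = m + 1), hi', hm]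
    exact ha
  · have h1 : i ≠ m + 1 := by omega
    have h2 : i + 1 ≠ m + 1 := by omega
    simp only [if_neg h1, if_neg h2]
    exact harc i (by omega)

/-- If `max S + min T ≤ n` and `min S + max T ≤ n`, then the
competition period of `T_n⟨S;T⟩` is `1`: for all sufficiently large `m`, the
`m`-step and `(m+1)`-step competition graphs have exactly the same edges. -/
theorem competition_period_one (n : ℕ) (hn : 2 ≤ n) (S T : Finset ℕ)
    (hS : S.Nonempty) (hT : T.Nonempty)
    (hSsub : S ⊆ Finset.Icc 1 (n - 1)) (hTsub : T ⊆ Finset.Icc 1 (n - 1))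
    (hST1 : S.max' hS + T.min' hT ≤ n) (hST2 : S.min' hS + T.max' hT ≤ n) :
    ∃ M : ℕ, 0 < M ∧ ∀ m : ℕ, M ≤ m →
      ∀ u ∈ Finset.Icc (1 : ℤ) (n : ℤ), ∀ v ∈ Finset.Icc (1 : ℤ) (n : ℤ),
        (CompAdj n S T m u v ↔ CompAdj n S T (m + 1) u v) := by
  classical
  -- monotonicity of CompAdj for m ≥ 1
  have hcompmono : ∀ m : ℕ, 1 ≤ m → ∀ u v : ℤ,
      CompAdj n S T m u v → CompAdj n S T (m + 1) u v := by
    intro m hm u v ⟨hne, x, h1, h2⟩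
    obtain ⟨y, hy⟩ := toep_out n S T hS hT hSsub hTsub hST2 x (walk_end_mem hm h1)
    exact ⟨hne, y, walk_extend h1 hy, walk_extend h2 hy⟩
  set box : Finset (ℤ × ℤ) :=
    (Finset.Icc (1 : ℤ) (n : ℤ)) ×ˢ (Finset.Icc (1 : ℤ) (n : ℤ)) with hboxdef
  set f : ℕ → Finset (ℤ × ℤ) :=
    fun m => box.filter (fun p => CompAdj n S T (m + 1) p.1 p.2) with hfdef
  have hmono : ∀ m, f m ⊆ f (m + 1) := by
    intro m p hp
    rw [hfdef, Finset.mem_filter] at hp ⊢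
    exact ⟨hp.1, hcompmono (m + 1) (by omega) p.1 p.2 hp.2⟩
  have hchain : ∀ m k : ℕ, f m ⊆ f (m + k) := by
    intro m k
    induction k with
    | zero => exact Finset.Subset.refl _
    | succ k ih => exact ih.trans (hmono (m + k))
  -- the cardinalities achieve a maximum
  have hne : (Set.range fun m => (f m).card).Nonempty := ⟨(f 0).card, 0, rfl⟩
  have hbdd : BddAbove (Set.range fun m => (f m).card) := by
    refine ⟨box.card, ?_⟩
    rintro _ ⟨m, rfl⟩
    exact Finset.card_le_card (Finset.filter_subset _ _)
  obtain ⟨M, hM⟩ := Nat.sSup_mem hne hbdd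
  have hconst : ∀ k, f (M + k) = f M := by
    intro k
    refine (Finset.eq_of_subset_of_card_le (hchain M k) ?_).symm
    exact le_of_le_of_eq (le_csSup hbdd ⟨M + k, rfl⟩) hM.symm
  refine ⟨M + 1, by omega, ?_⟩
  intro m hm u hu v hv
  obtain ⟨j, rfl⟩ := Nat.exists_eq_add_of_le hm
  have key : ∀ k : ℕ, (CompAdj n S T (M + 1 + k) u v ↔ (u, v) ∈ f M) := by
    intro k
    rw [show M + 1 + k = M + k + 1 from by omega, ← hconst k, hfdef]
    simp only [Finset.mem_filter]
    constructor
    · intro h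
      refine ⟨?_, h⟩
      rw [hboxdef, Finset.mem_product]
      exact ⟨hu, hv⟩
    · intro h
      exact h.2
  rw [key j, show M + 1 + j + 1 = M + 1 + (j + 1) by omega, key (j + 1)]
end

section
/- Let D be the Toeplitz digraph of T_n⟨S;T⟩ with max S + min T ≤ n and min S + max T ≤ n, and let d = gcd{s + t : s ∈ S, t ∈ T}. Then there exists a positive integer M such that for every integer m ≥ M and all distinct vertices u, v of D, u and v are adjacent in the m-step competition graph C^m(D) if and only if u ≡ v (mod d). (That is, the limit of the sequence C^m(D) is the disjoint union of the cliques {v ∈ {1,…,n} : v ≡ i (mod d)} for 1 ≤ i ≤ d.) -/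
namespace Toep
variable {n : ℕ} {S T : Finset ℕ}

lemma hasWalk_refl (u : ℤ) : HasWalk n S T 0 u u :=
  ⟨fun _ => u, rfl, rfl, fun i hi => absurd hi (Nat.not_lt_zero i)⟩

lemma hasWalk_cons {m : ℕ} {u y v : ℤ} (h : ToepArc n S T u y) (hw : HasWalk n S T m y v) :
    HasWalk n S T (m + 1) u v := by
  obtain ⟨w, h0, hm, harc⟩ := hw
  refine ⟨fun i => if i = 0 then u else w (i - 1), rfl, by simp [hm], ?_⟩
  intro i hi
  cases i with
  | zero =>
      simpa [h0] using h
  | succ j =>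
      have hj : j < m := by omega
      simpa using harc j hj

lemma hasWalk_tail {m : ℕ} {u v : ℤ} (h : HasWalk n S T (m + 1) u v) :
    ∃ y, ToepArc n S T u y ∧ HasWalk n S T m y v := by
  obtain ⟨w, h0, hm, harc⟩ := h
  refine ⟨w 1, by rw [← h0]; exact harc 0 (by omega), fun i => w (i + 1), rfl, hm, ?_⟩
  intro i hi
  exact harc (i + 1) (by omega)

lemma hasWalk_append {m1 m2 : ℕ} {u y v : ℤ} (h1 : HasWalk n S T m1 u y)
    (h2 : HasWalk n S T m2 y v) : HasWalk n S T (m1 + m2) u v := by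
  induction m1 generalizing u with
  | zero =>
      obtain ⟨w, h0, hm, _⟩ := h1
      have : u = y := by rw [← h0, hm]
      rw [Nat.zero_add, this]; exact h2
  | succ m ih =>
      obtain ⟨z, ha, hw⟩ := hasWalk_tail h1
      have : m + 1 + m2 = (m + m2) + 1 := by omega
      rw [this]
      exact hasWalk_cons ha (ih hw)

lemma zig (s t : ℕ) (hsS : s ∈ S) (htT : t ∈ T) (hs1 : 1 ≤ s) (ht1 : 1 ≤ t)
    (hstn : s + t ≤ n) :
    ∀ N a b : ℕ, a + b ≤ N → ∀ u v : ℤ, 1 ≤ u → u ≤ (n : ℤ) → 1 ≤ v → v ≤ (n : ℤ) →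
      v = u + (a : ℤ) * s - (b : ℤ) * t → HasWalk n S T (a + b) u v := by
  intro N
  induction N with
  | zero =>
      intro a b hab u v hu1 hun hv1 hvn hv
      have ha : a = 0 := by omega
      have hb : b = 0 := by omega
      subst ha hb
      have : v = u := by simpa using hv
      subst this
      exact hasWalk_refl v
  | succ N ih =>
      intro a b hab u v hu1 hun hv1 hvn hv
      have hsn : (s : ℤ) + t ≤ (n : ℤ) := by exact_mod_cast hstn
      have hs1' : (1 : ℤ) ≤ (s : ℤ) := by exact_mod_cast hs1
      have ht1' : (1 : ℤ) ≤ (t : ℤ) := by exact_mod_cast ht1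
      rcases Nat.eq_zero_or_pos a with ha | ha
      · subst ha
        rcases Nat.eq_zero_or_pos b with hb | hb
        · subst hb
          have : v = u := by simpa using hv
          subst this
          exact hasWalk_refl v
        · obtain ⟨b', rfl⟩ : ∃ b', b = b' + 1 := ⟨b - 1, by omega⟩
          have hbt : (t : ℤ) ≤ ((b' : ℤ) + 1) * t := by nlinarith [Int.natCast_nonneg b']
          have hvle : v ≤ u - t := by
            push_cast at hv; nlinarith [Int.natCast_nonneg b']
          have harc : ToepArc n S T u (u - t) := by
            refine ⟨Finset.mem_Icc.mpr ⟨hu1, hun⟩, Finset.mem_Icc.mpr ⟨by linarith, by linarith⟩,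
              Or.inr ⟨t, htT, rfl⟩⟩
          have hrec := ih 0 b' (by omega) (u - t) v (by linarith) (by linarith) hv1 hvn
            (by push_cast at hv ⊢; linarith)
          have := hasWalk_cons harc hrec
          have heq : (0 : ℕ) + b' + 1 = 0 + (b' + 1) := by omega
          rwa [heq] at this
      · obtain ⟨a', rfl⟩ : ∃ a', a = a' + 1 := ⟨a - 1, by omega⟩
        by_cases hup : u + s ≤ (n : ℤ)
        · have harc : ToepArc n S T u (u + s) := by
            refine ⟨Finset.mem_Icc.mpr ⟨hu1, hun⟩, Finset.mem_Icc.mpr ⟨by linarith, hup⟩,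
              Or.inl ⟨s, hsS, rfl⟩⟩
          have hrec := ih a' b (by omega) (u + s) v (by linarith) hup hv1 hvn
            (by push_cast at hv ⊢; linarith)
          have := hasWalk_cons harc hrec
          have heq : a' + b + 1 = a' + 1 + b := by omega
          rwa [heq] at this
        · push_neg at hup
          have hut : (t : ℤ) + 1 ≤ u := by linarith
          rcases Nat.eq_zero_or_pos b with hb | hb
          · exfalso
            subst hb
            have : (0 : ℤ) ≤ (a' : ℤ) * s := by positivity
            push_cast at hv
            nlinarith
          · obtain ⟨b'', rfl⟩ : ∃ b'', b = b'' + 1 := ⟨b - 1, by omega⟩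
            have harc : ToepArc n S T u (u - t) := by
              refine ⟨Finset.mem_Icc.mpr ⟨hu1, hun⟩,
                Finset.mem_Icc.mpr ⟨by linarith, by linarith⟩, Or.inr ⟨t, htT, rfl⟩⟩
            have hrec := ih (a' + 1) b'' (by omega) (u - t) v (by linarith) (by linarith) hv1 hvn
              (by push_cast at hv ⊢; linarith)
            have := hasWalk_cons harc hrec
            have heq : a' + 1 + b'' + 1 = a' + 1 + (b'' + 1) := by omega
            rwa [heq] at this

/-- single hop: any displacement divisible by `gcd s t`. -/
lemma hop (s t : ℕ) (hsS : s ∈ S) (htT : t ∈ T) (hs1 : 1 ≤ s) (ht1 : 1 ≤ t)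
    (hstn : s + t ≤ n) (w z : ℤ) (hw1 : 1 ≤ w) (hwn : w ≤ (n : ℤ)) (hz1 : 1 ≤ z)
    (hzn : z ≤ (n : ℤ)) (hdvd : ((Nat.gcd s t : ℕ) : ℤ) ∣ z - w) :
    ∃ ℓ, HasWalk n S T ℓ w z := by
  obtain ⟨c, hc⟩ := hdvd
  have hbez := Nat.gcd_eq_gcd_ab s t
  set A := Nat.gcdA s t with hA
  set B := Nat.gcdB s t with hB
  set K : ℤ := |A * c| + |B * c| with hK
  have hKA : 0 ≤ A * c + K := by
    have := abs_nonneg (B * c); have := neg_abs_le (A * c); simp only [hK]; linarith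
  have hKB : 0 ≤ K - B * c := by
    have := abs_nonneg (A * c); have := le_abs_self (B * c); simp only [hK]; linarith
  have hs1' : (1 : ℤ) ≤ (s : ℤ) := by exact_mod_cast hs1
  have ht1' : (1 : ℤ) ≤ (t : ℤ) := by exact_mod_cast ht1
  set aZ : ℤ := A * c + (t : ℤ) * K with haZ
  set bZ : ℤ := (s : ℤ) * K - B * c with hbZ
  have haZ0 : 0 ≤ aZ := by
    have h1 : K ≤ (t : ℤ) * K := by nlinarith [abs_nonneg (A*c), abs_nonneg (B*c)]
    simp only [haZ]; linarith
  have hbZ0 : 0 ≤ bZ := by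
    have h1 : K ≤ (s : ℤ) * K := by nlinarith [abs_nonneg (A*c), abs_nonneg (B*c)]
    simp only [hbZ]; linarith
  set a : ℕ := aZ.toNat with ha
  set b : ℕ := bZ.toNat with hb
  have haa : (a : ℤ) = aZ := Int.toNat_of_nonneg haZ0
  have hbb : (b : ℤ) = bZ := Int.toNat_of_nonneg hbZ0
  refine ⟨a + b, zig s t hsS htT hs1 ht1 hstn (a + b) a b le_rfl w z hw1 hwn hz1 hzn ?_⟩
  rw [haa, hbb, haZ, hbZ]
  have : z - w = ((s : ℤ) * A + t * B) * c := by rw [← hbez]; linarith [hc]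
  linarith [this, mul_comm A c]

/-- closed walks of length any multiple of `s/gcd + t/gcd` at any vertex. -/
lemma gadget (s t : ℕ) (hsS : s ∈ S) (htT : t ∈ T) (hs1 : 1 ≤ s) (ht1 : 1 ≤ t)
    (hstn : s + t ≤ n) (x : ℤ) (hx1 : 1 ≤ x) (hxn : x ≤ (n : ℤ)) (k : ℕ) :
    HasWalk n S T (k * (s / Nat.gcd s t + t / Nat.gcd s t)) x x := by
  set γ := Nat.gcd s t with hγ
  have hγpos : 0 < γ := Nat.gcd_pos_of_pos_left t hs1
  obtain ⟨s', hs'⟩ := Nat.gcd_dvd_left s t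
  obtain ⟨t', ht'⟩ := Nat.gcd_dvd_right s t
  rw [← hγ] at hs' ht'
  have hsd : s / γ = s' := by
    conv_lhs => rw [hs']
    exact Nat.mul_div_cancel_left _ hγpos
  have htd : t / γ = t' := by
    conv_lhs => rw [ht']
    exact Nat.mul_div_cancel_left _ hγpos
  have hmul : (k * t') * s = (k * s') * t := by
    conv_lhs => rw [hs']
    conv_rhs => rw [ht']
    ring
  have hmulZ : ((k * t' : ℕ) : ℤ) * s = ((k * s' : ℕ) : ℤ) * t := by exact_mod_cast hmul
  have key := zig s t hsS htT hs1 ht1 hstn (k * t' + k * s') (k * t') (k * s') le_rfl x x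
    hx1 hxn hx1 hxn (by push_cast at hmulZ ⊢; linarith)
  have heq : k * t' + k * s' = k * (s / γ + t / γ) := by rw [hsd, htd]; ring
  rwa [heq] at key

/-- the mod-`d` invariant: every step is `≡ s1 (mod d)`. -/
lemma inv (d s1 t1 : ℕ) (hs1S : s1 ∈ S) (ht1T : t1 ∈ T)
    (hpair : ∀ s ∈ S, ∀ t ∈ T, d ∣ s + t) :
    ∀ m : ℕ, ∀ u x : ℤ, HasWalk n S T m u x → (d : ℤ) ∣ x - u - m * s1 := by
  intro m
  induction m with
  | zero =>
      intro u x h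
      obtain ⟨w, h0, hm, -⟩ := h
      have : x = u := by rw [← h0, hm]
      simp [this]
  | succ m ih =>
      intro u x h
      obtain ⟨y, harc, hw⟩ := hasWalk_tail h
      have h1 : (d : ℤ) ∣ y - u - s1 := by
        obtain ⟨-, -, hc | hc⟩ := harc
        · obtain ⟨s, hsS, rfl⟩ := hc
          have d1 : (d : ℤ) ∣ (s : ℤ) + t1 := by exact_mod_cast hpair s hsS t1 ht1T
          have d2 : (d : ℤ) ∣ (s1 : ℤ) + t1 := by exact_mod_cast hpair s1 hs1S t1 ht1T
          have := dvd_sub d1 d2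
          have heq : (s : ℤ) + t1 - ((s1 : ℤ) + t1) = u + s - u - s1 := by ring
          rwa [heq] at this
        · obtain ⟨t, htT, rfl⟩ := hc
          have d1 : (d : ℤ) ∣ (s1 : ℤ) + t := by exact_mod_cast hpair s1 hs1S t htT
          have := dvd_neg.mpr d1
          have heq : -((s1 : ℤ) + t) = u - t - u - s1 := by ring
          rwa [heq] at this
      have h2 := ih y x hw
      have := dvd_add h1 h2
      have heq : y - u - s1 + (x - y - m * s1) = x - u - (m + 1 : ℕ) * s1 := by
        push_cast; ring
      rwa [heq] at this

lemma two_gen (a b : ℕ) (ha : 0 < a) (hb : 0 < b) (hco : Nat.Coprime a b)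
    (m : ℕ) (hm : a * b ≤ m) : ∃ i j : ℕ, m = i * a + j * b := by
  have hbez : (1 : ℤ) = a * Nat.gcdA a b + b * Nat.gcdB a b := by
    have := Nat.gcd_eq_gcd_ab a b
    rwa [hco] at this; 
  set B := Nat.gcdB a b with hB
  have hapos : (0 : ℤ) < a := by exact_mod_cast ha
  set j : ℤ := ((m : ℤ) * B) % a with hj
  have hj0 : 0 ≤ j := Int.emod_nonneg _ (by positivity)
  have hja : j < a := Int.emod_lt_of_pos _ hapos
  have hdvd : (a : ℤ) ∣ (m : ℤ) - j * b := by
    have e1 : (a : ℤ) ∣ (m : ℤ) * B - j :=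
      ⟨(m : ℤ) * B / a, by rw [hj, Int.emod_def]; ring⟩
    -- m - j*b = m*(1 - b*B)*1 + (m*B - j)*b ; 1 - b*B = a * A
    obtain ⟨q, hq⟩ := e1
    refine ⟨(m : ℤ) * Nat.gcdA a b + q * b, ?_⟩
    have : (m : ℤ) * B - j = a * q := hq
    nlinarith [hbez, this]
  have hjb : j * b ≤ (m : ℤ) := by
    have h1 : j * b < a * b := by
      have hbpos : (0 : ℤ) < b := by exact_mod_cast hb
      exact mul_lt_mul_of_pos_right hja hbpos
    have : (a : ℤ) * b ≤ m := by exact_mod_cast hm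
    linarith
  obtain ⟨i, hi⟩ := hdvd
  have hi0 : 0 ≤ i := by nlinarith
  refine ⟨i.toNat, j.toNat, ?_⟩
  have : (m : ℤ) = i.toNat * a + j.toNat * b := by
    rw [Int.toNat_of_nonneg hi0, Int.toNat_of_nonneg hj0]; linarith
  exact_mod_cast this

lemma two_gen' (a b N : ℕ) (ha : 0 < a) (hb : 0 < b) (hco : Nat.Coprime a b)
    (m : ℕ) (hm : a * b + N * b ≤ m) : ∃ i j : ℕ, m = i * a + j * b ∧ N ≤ j * b := by
  obtain ⟨i, j, hij⟩ := two_gen a b ha hb hco (m - N * b) (by omega)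
  refine ⟨i, j + N, ?_, ?_⟩
  · have h1 : N * b ≤ m := by omega
    have := Nat.sub_eq_iff_eq_add h1 |>.mp hij
    rw [this]; ring
  · calc N = N * 1 := (Nat.mul_one N).symm
      _ ≤ N * b := Nat.mul_le_mul_left N hb
      _ ≤ (j + N) * b := Nat.mul_le_mul_right b (by omega)

lemma semi (A : Finset ℕ) (hne : A.Nonempty) :
    (∀ x ∈ A, 0 < x) → ∃ N : ℕ, ∀ m : ℕ, N ≤ m → A.gcd id ∣ m →
      ∃ f : ℕ → ℕ, m = ∑ x ∈ A, f x * x := by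
  induction hne using Finset.Nonempty.cons_induction with
  | singleton a =>
      intro hpos
      refine ⟨1, fun m hm hdvd => ⟨fun _ => m / a, ?_⟩⟩
      simp only [Finset.gcd_singleton, id_eq, normalize_eq] at hdvd
      simp only [Finset.sum_singleton]
      exact (Nat.div_mul_cancel hdvd).symm
  | cons a A' hnotmem hne' ih =>
      intro hpos
      have hapos : 0 < a := hpos a (Finset.mem_cons_self a A')
      have hpos' : ∀ x ∈ A', 0 < x := fun x hx => hpos x (Finset.mem_cons.mpr (Or.inr hx))
      obtain ⟨N', hN'⟩ := ih hpos'
      set h' := A'.gcd id with hh'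
      have hh'pos : 0 < h' := by
        obtain ⟨x, hx⟩ := hne'
        have : h' ∣ x := Finset.gcd_dvd hx
        have hxpos := hpos' x hx
        rcases Nat.eq_zero_or_pos h' with h0 | h
        · exfalso; rw [h0] at this; simp at this; omega
        · exact h
      set g0 := Nat.gcd a h' with hg0
      have hg0pos : 0 < g0 := Nat.gcd_pos_of_pos_left h' hapos
      set a0 := a / g0 with ha0
      set b0 := h' / g0 with hb0
      have ha0pos : 0 < a0 := Nat.div_pos (Nat.le_of_dvd hapos (Nat.gcd_dvd_left a h')) hg0pos
      have hb0pos : 0 < b0 := Nat.div_pos (Nat.le_of_dvd hh'pos (Nat.gcd_dvd_right a h')) hg0pos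
      have hco : Nat.Coprime a0 b0 := Nat.coprime_div_gcd_div_gcd hg0pos
      refine ⟨g0 * (a0 * b0 + N' * b0) + g0, fun m hm hdvd => ?_⟩
      rw [Finset.cons_eq_insert, Finset.gcd_insert] at hdvd
      have hdvd' : g0 ∣ m := hdvd
      obtain ⟨q, hq⟩ := hdvd'
      have hq' : a0 * b0 + N' * b0 ≤ q := by
        rcases Nat.lt_or_ge q (a0 * b0 + N' * b0 + 1) with h | h
        · exfalso
          have : m ≤ g0 * (a0 * b0 + N' * b0) := by
            rw [hq]
            exact Nat.mul_le_mul_left g0 (by omega)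
          omega
        · omega
      obtain ⟨i, j, hij, hjN⟩ := two_gen' a0 b0 N' ha0pos hb0pos hco q hq'
      have hga : g0 * a0 = a := Nat.mul_div_cancel' (Nat.gcd_dvd_left a h') 
      have hgb : g0 * b0 = h' := Nat.mul_div_cancel' (Nat.gcd_dvd_right a h')
      have hjh' : j * h' = j * b0 * g0 := by rw [← hgb]; ring
      obtain ⟨f, hf⟩ := hN' (j * h') (by
          calc N' ≤ j * b0 := hjN
          _ ≤ j * b0 * g0 := Nat.le_mul_of_pos_right _ hg0pos
          _ = j * h' := by rw [← hgb]; ring) ⟨j, Nat.mul_comm j h'⟩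
      refine ⟨fun x => if x = a then i else f x, ?_⟩
      rw [Finset.sum_cons]
      have hsum : ∑ x ∈ A', (if x = a then i else f x) * x = ∑ x ∈ A', f x * x := by
        apply Finset.sum_congr rfl
        intro x hx
        have : x ≠ a := fun h => hnotmem (h ▸ hx)
        rw [if_neg this]
      rw [hsum, ← hf]
      simp only [if_pos rfl]
      calc m = g0 * q := hq
        _ = g0 * (i * a0 + j * b0) := by rw [hij]
        _ = i * (g0 * a0) + j * (g0 * b0) := by ring
        _ = i * a + j * h' := by rw [hga, hgb]

lemma pad (x : ℤ) (hx1 : 1 ≤ x) (hxn : x ≤ (n : ℤ)) (f : ℕ → ℕ) :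
    ∀ A : Finset ℕ,
      (∀ γ ∈ A, ∀ k : ℕ, HasWalk n S T (k * γ) x x) →
      HasWalk n S T (∑ γ ∈ A, f γ * γ) x x := by
  classical
  intro A
  induction A using Finset.induction_on with
  | empty => intro _; simpa using hasWalk_refl (n := n) (S := S) (T := T) x
  | @insert a A' hnot ih =>
      intro hA
      rw [Finset.sum_insert hnot]
      exact hasWalk_append (hA a (Finset.mem_insert_self a A') (f a))
        (ih fun γ hγ => hA γ (Finset.mem_insert_of_mem hγ))

lemma foldr_gcd_dvd_seed : ∀ (L : List ℕ) (x : ℕ), L.foldr Nat.gcd x ∣ x := by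
  intro L
  induction L with
  | nil => exact fun x => dvd_refl x
  | cons a L ih => exact fun x => (Nat.gcd_dvd_right a _).trans (ih x)

lemma foldr_gcd_dvd_mem : ∀ (L : List ℕ) (x : ℕ), ∀ γ ∈ L, L.foldr Nat.gcd x ∣ γ := by
  intro L
  induction L with
  | nil => intro x γ h; exact absurd h List.not_mem_nil
  | cons a L ih =>
      intro x γ h
      rcases List.mem_cons.mp h with rfl | h
      · exact Nat.gcd_dvd_left γ _
      · exact (Nat.gcd_dvd_right a _).trans (ih x γ h)

lemma reach_aux (s1 t1 : ℕ) (hs1 : 1 ≤ s1) (ht1 : 1 ≤ t1) (hs1n : s1 ≤ n) (ht1n : t1 ≤ n)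
    (hbase : ∀ w z : ℤ, 1 ≤ w → w ≤ (n : ℤ) → 1 ≤ z → z ≤ (n : ℤ) →
      ((Nat.gcd s1 t1 : ℕ) : ℤ) ∣ z - w → ∃ ℓ, HasWalk n S T ℓ w z) :
    ∀ L : List ℕ,
      (∀ γ ∈ L, (γ ∣ t1 ∨ γ ∣ s1) ∧ ∀ w z : ℤ, 1 ≤ w → w ≤ (n : ℤ) → 1 ≤ z → z ≤ (n : ℤ) →
        ((γ : ℕ) : ℤ) ∣ z - w → ∃ ℓ, HasWalk n S T ℓ w z) →
      ∀ w z : ℤ, 1 ≤ w → w ≤ (n : ℤ) → 1 ≤ z → z ≤ (n : ℤ) →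
        ((L.foldr Nat.gcd (Nat.gcd s1 t1) : ℕ) : ℤ) ∣ z - w → ∃ ℓ, HasWalk n S T ℓ w z := by
  intro L
  induction L with
  | nil => intro _ w z hw1 hwn hz1 hzn hdvd; exact hbase w z hw1 hwn hz1 hzn hdvd
  | cons γ L ih =>
      intro hhop w z hw1 hwn hz1 hzn hdvd
      obtain ⟨⟨hγdvd, hγhop⟩, hrest⟩ :
          ((γ ∣ t1 ∨ γ ∣ s1) ∧ _) ∧ (∀ γ' ∈ L, _) :=
        ⟨hhop γ List.mem_cons_self, fun γ' h => hhop γ' (List.mem_cons_of_mem γ h)⟩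
      set h' := L.foldr Nat.gcd (Nat.gcd s1 t1) with hh'
      have hh's1 : h' ∣ s1 := (foldr_gcd_dvd_seed L _).trans (Nat.gcd_dvd_left s1 t1)
      have hh't1 : h' ∣ t1 := (foldr_gcd_dvd_seed L _).trans (Nat.gcd_dvd_right s1 t1)
      have hh'pos : 0 < h' := by
        rcases Nat.eq_zero_or_pos h' with h0 | h; · rw [h0] at hh's1; omega
        · exact h
      have hγpos : 0 < γ := by
        rcases Nat.eq_zero_or_pos γ with h0 | h
        · exfalso; rcases hγdvd with hd | hd <;> rw [h0] at hd <;> simp at hd <;> omega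
        · exact h
      -- Bezout decomposition
      obtain ⟨k, hk⟩ := hdvd
      have hbez := Nat.gcd_eq_gcd_ab γ h'
      set v : ℤ := w + (h' : ℤ) * (Nat.gcdB γ h') * k with hv
      have hzv : z - v = (γ : ℤ) * (Nat.gcdA γ h') * k := by
        rw [hv]
        have : z - w = ((γ : ℤ) * Nat.gcdA γ h' + (h' : ℤ) * Nat.gcdB γ h') * k := by
          rw [← hbez]
          simpa [List.foldr] using hk
        linarith [this]
      -- reduce v into [1, n] modulo lcm
      set Lc := Nat.lcm h' γ with hLc
      have hLcpos : 0 < Lc := Nat.lcm_pos hh'pos hγpos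
      have hLcn : Lc ≤ n := by
        rcases hγdvd with hd | hd
        · exact le_trans (Nat.le_of_dvd ht1 (Nat.lcm_dvd hh't1 hd)) ht1n
        · exact le_trans (Nat.le_of_dvd hs1 (Nat.lcm_dvd hh's1 hd)) hs1n
      have hLcZ : (0 : ℤ) < (Lc : ℤ) := by exact_mod_cast hLcpos
      set w' : ℤ := (v - 1) % (Lc : ℤ) + 1 with hw'
      have hw'1 : 1 ≤ w' := by
        have := Int.emod_nonneg (v - 1) (ne_of_gt hLcZ)
        rw [hw']; linarith
      have hw'n : w' ≤ (n : ℤ) := by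
        have h1 := Int.emod_lt_of_pos (v - 1) hLcZ
        have h2 : (Lc : ℤ) ≤ (n : ℤ) := by exact_mod_cast hLcn
        rw [hw']; linarith
      have hLcdvd : (Lc : ℤ) ∣ w' - v := by
        refine ⟨-((v - 1) / Lc), ?_⟩
        rw [hw']
        have := Int.emod_def (v - 1) (Lc : ℤ)
        linarith
      have hdvd1 : ((h' : ℕ) : ℤ) ∣ w' - w := by
        have d1 : ((h' : ℕ) : ℤ) ∣ w' - v :=
          dvd_trans (by exact_mod_cast (Nat.dvd_lcm_left h' γ : h' ∣ Lc)) hLcdvd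
        have d2 : ((h' : ℕ) : ℤ) ∣ v - w := ⟨Nat.gcdB γ h' * k, by rw [hv]; ring⟩
        have := dvd_add d1 d2
        have heq : w' - v + (v - w) = w' - w := by ring
        rwa [heq] at this
      have hdvd2 : ((γ : ℕ) : ℤ) ∣ z - w' := by
        have d1 : ((γ : ℕ) : ℤ) ∣ v - w' :=
          dvd_trans (by exact_mod_cast (Nat.dvd_lcm_right h' γ : γ ∣ Lc)) (dvd_sub_comm.mp hLcdvd)
        have d2 : ((γ : ℕ) : ℤ) ∣ z - v := ⟨Nat.gcdA γ h' * k, by rw [hzv]; ring⟩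
        have := dvd_add d2 d1
        have heq : z - v + (v - w') = z - w' := by ring
        rwa [heq] at this
      obtain ⟨ℓ1, hw1'⟩ := ih hrest w w' hw1 hwn hw'1 hw'n hdvd1
      obtain ⟨ℓ2, hw2'⟩ := hγhop w' z hw'1 hw'n hz1 hzn hdvd2
      exact ⟨ℓ1 + ℓ2, hasWalk_append hw1' hw2'⟩

lemma key (n : ℕ) (hn : 2 ≤ n) (S T : Finset ℕ)
    (hS : S.Nonempty) (hT : T.Nonempty)
    (hSsub : S ⊆ Finset.Icc 1 (n - 1)) (hTsub : T ⊆ Finset.Icc 1 (n - 1))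
    (hST1 : S.max' hS + T.min' hT ≤ n) (hST2 : S.min' hS + T.max' hT ≤ n)
    (d : ℕ) (hd : d = (S ×ˢ T).gcd (fun p => p.1 + p.2)) :
    ∃ M : ℕ, 0 < M ∧ ∀ p : ℕ, M ≤ p → ∀ u x : ℤ,
      u ∈ Finset.Icc (1 : ℤ) (n : ℤ) → x ∈ Finset.Icc (1 : ℤ) (n : ℤ) →
      (d : ℤ) ∣ x - u - p * (S.min' hS : ℤ) → HasWalk n S T p u x := by
  classical
  set s1 := S.min' hS with hs1def
  set t1 := T.min' hT with ht1def
  have hs1S : s1 ∈ S := S.min'_mem hS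
  have ht1T : t1 ∈ T := T.min'_mem hT
  have hSrange : ∀ s ∈ S, 1 ≤ s ∧ s ≤ n - 1 := fun s hs => Finset.mem_Icc.mp (hSsub hs)
  have hTrange : ∀ t ∈ T, 1 ≤ t ∧ t ≤ n - 1 := fun t ht => Finset.mem_Icc.mp (hTsub ht)
  have hs1pos : 1 ≤ s1 := (hSrange s1 hs1S).1
  have ht1pos : 1 ≤ t1 := (hTrange t1 ht1T).1
  have hst1 : ∀ s ∈ S, s + t1 ≤ n := fun s hs => le_trans
    (Nat.add_le_add_right (S.le_max' s hs) t1) hST1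
  have hs1t : ∀ t ∈ T, s1 + t ≤ n := fun t ht => le_trans
    (Nat.add_le_add_left (T.le_max' t ht) s1) hST2
  have hs1t1 : s1 + t1 ≤ n := hst1 s1 hs1S
  have hs1n : s1 ≤ n := by omega
  have ht1n : t1 ≤ n := by omega
  have hpair : ∀ s ∈ S, ∀ t ∈ T, d ∣ s + t := by
    intro s hs t ht
    rw [hd]
    exact Finset.gcd_dvd (show (s, t) ∈ S ×ˢ T from Finset.mem_product.mpr ⟨hs, ht⟩)
  have hdpos : 0 < d := by
    rcases Nat.eq_zero_or_pos d with h0 | h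
    · exfalso
      have := hpair s1 hs1S t1 ht1T
      rw [h0] at this
      simp at this
      omega
    · exact h
  set g := Nat.gcd d s1 with hgdef
  have hgpos : 0 < g := Nat.gcd_pos_of_pos_left s1 hdpos
  have hgd : g ∣ d := Nat.gcd_dvd_left d s1
  have hgs1 : g ∣ s1 := Nat.gcd_dvd_right d s1
  have hgt1 : g ∣ t1 := by
    have h1 : g ∣ s1 + t1 := hgd.trans (hpair s1 hs1S t1 ht1T)
    have := Nat.dvd_sub h1 hgs1
    simpa using this
  have hgγ : ∀ s ∈ S, g ∣ Nat.gcd s t1 := by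
    intro s hs
    have h1 : g ∣ s + t1 := hgd.trans (hpair s hs t1 ht1T)
    have h2 : g ∣ s := by have := Nat.dvd_sub h1 hgt1; simpa using this
    exact Nat.dvd_gcd h2 hgt1
  have hgδ : ∀ t ∈ T, g ∣ Nat.gcd s1 t := by
    intro t ht
    have h1 : g ∣ s1 + t := hgd.trans (hpair s1 hs1S t ht)
    have h2 : g ∣ t := by have := Nat.dvd_sub h1 hgs1; simpa using this
    exact Nat.dvd_gcd hgs1 h2
  -- the gadget length set
  set G : Finset ℕ := S.image (fun s => s / Nat.gcd s t1 + t1 / Nat.gcd s t1) ∪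
      T.image (fun t => s1 / Nat.gcd s1 t + t / Nat.gcd s1 t) with hGdef
  have hGne : G.Nonempty := ⟨s1 / Nat.gcd s1 t1 + t1 / Nat.gcd s1 t1,
    Finset.mem_union_left _ (Finset.mem_image_of_mem _ hs1S)⟩
  have hGpos : ∀ γ ∈ G, 0 < γ := by
    intro γ hγ
    rcases Finset.mem_union.mp hγ with h | h
    · obtain ⟨s, hs, rfl⟩ := Finset.mem_image.mp h
      have : 0 < s / Nat.gcd s t1 := Nat.div_pos
        (Nat.le_of_dvd (hSrange s hs).1 (Nat.gcd_dvd_left s t1))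
        (Nat.gcd_pos_of_pos_left t1 (hSrange s hs).1)
      exact Nat.lt_of_lt_of_le this (Nat.le_add_right _ _)
    · obtain ⟨t, ht, rfl⟩ := Finset.mem_image.mp h
      have : 0 < t / Nat.gcd s1 t := Nat.div_pos
        (Nat.le_of_dvd (hTrange t ht).1 (Nat.gcd_dvd_right s1 t))
        (Nat.gcd_pos_of_pos_left t hs1pos)
      have h2 : 0 < s1 / Nat.gcd s1 t + t / Nat.gcd s1 t := Nat.lt_of_lt_of_le this
        (Nat.le_add_left _ _)
      exact h2
  set h := G.gcd id with hhdef
  -- g * h divides d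
  have hmulA : ∀ s ∈ S, g * h ∣ s + t1 := by
    intro s hs
    have hmem : (s / Nat.gcd s t1 + t1 / Nat.gcd s t1) ∈ G :=
      Finset.mem_union_left _ (Finset.mem_image_of_mem _ hs)
    have h1 : h ∣ s / Nat.gcd s t1 + t1 / Nat.gcd s t1 := Finset.gcd_dvd hmem
    have h2 : Nat.gcd s t1 * h ∣ Nat.gcd s t1 * (s / Nat.gcd s t1 + t1 / Nat.gcd s t1) :=
      mul_dvd_mul_left _ h1
    have h3 : Nat.gcd s t1 * (s / Nat.gcd s t1 + t1 / Nat.gcd s t1) = s + t1 := by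
      rw [Nat.mul_add, Nat.mul_div_cancel' (Nat.gcd_dvd_left s t1),
        Nat.mul_div_cancel' (Nat.gcd_dvd_right s t1)]
    rw [h3] at h2
    exact dvd_trans (mul_dvd_mul_right (hgγ s hs) h) h2
  have hmulB : ∀ t ∈ T, g * h ∣ s1 + t := by
    intro t ht
    have hmem : (s1 / Nat.gcd s1 t + t / Nat.gcd s1 t) ∈ G :=
      Finset.mem_union_right _ (Finset.mem_image_of_mem _ ht)
    have h1 : h ∣ s1 / Nat.gcd s1 t + t / Nat.gcd s1 t := Finset.gcd_dvd hmem
    have h2 : Nat.gcd s1 t * h ∣ Nat.gcd s1 t * (s1 / Nat.gcd s1 t + t / Nat.gcd s1 t) :=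
      mul_dvd_mul_left _ h1
    have h3 : Nat.gcd s1 t * (s1 / Nat.gcd s1 t + t / Nat.gcd s1 t) = s1 + t := by
      rw [Nat.mul_add, Nat.mul_div_cancel' (Nat.gcd_dvd_left s1 t),
        Nat.mul_div_cancel' (Nat.gcd_dvd_right s1 t)]
    rw [h3] at h2
    exact dvd_trans (mul_dvd_mul_right (hgδ t ht) h) h2
  have hghd : g * h ∣ d := by
    rw [hd]
    refine Finset.dvd_gcd ?_
    rintro ⟨s, t⟩ hp
    obtain ⟨hs, ht⟩ := Finset.mem_product.mp hp
    have A1 : ((g * h : ℕ) : ℤ) ∣ ((s : ℤ) + t1) := by exact_mod_cast hmulA s hs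
    have A2 : ((g * h : ℕ) : ℤ) ∣ ((s1 : ℤ) + t) := by exact_mod_cast hmulB t ht
    have A3 : ((g * h : ℕ) : ℤ) ∣ ((s1 : ℤ) + t1) := by exact_mod_cast hmulA s1 hs1S
    have A4 : ((g * h : ℕ) : ℤ) ∣ ((s : ℤ) + t) := by
      have := dvd_sub (dvd_add A1 A2) A3
      have heq : ((s : ℤ) + t1) + ((s1 : ℤ) + t) - ((s1 : ℤ) + t1) = (s : ℤ) + t := by ring
      rwa [heq] at this
    exact_mod_cast A4
  set e := d / g with hedef
  have hde : d = g * e := (Nat.mul_div_cancel' hgd).symm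
  have hhe : h ∣ e := by
    rw [hde] at hghd
    exact (mul_dvd_mul_iff_left (by omega : g ≠ 0)).mp hghd
  set s1' := s1 / g with hs1'def
  have hs1g : s1 = g * s1' := (Nat.mul_div_cancel' hgs1).symm
  have hecop : Nat.Coprime e s1' := Nat.coprime_div_gcd_div_gcd hgpos
  -- semigroup covering number
  obtain ⟨N, hN⟩ := semi G hGne hGpos
  -- uniform bound on shortest connecting walks
  set P := (Finset.Icc (1 : ℤ) (n : ℤ)) ×ˢ (Finset.Icc (1 : ℤ) (n : ℤ)) with hPdef
  set F : ℤ × ℤ → ℕ := fun q =>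
    if hq : ∃ ℓ, HasWalk n S T ℓ q.1 q.2 then Nat.find hq else 0 with hFdef
  set B := P.sup F with hBdef
  refine ⟨B + N + 1, by omega, ?_⟩
  intro p hp u x hu hx hdvd
  obtain ⟨hu1, hun⟩ := Finset.mem_Icc.mp hu
  obtain ⟨hx1, hxn⟩ := Finset.mem_Icc.mp hx
  -- the hop list
  set Γl : List ℕ := S.toList.map (fun s => Nat.gcd s t1) ++
      T.toList.map (fun t => Nat.gcd s1 t) with hΓdef
  have hhopprop : ∀ γ ∈ Γl, (γ ∣ t1 ∨ γ ∣ s1) ∧ ∀ w z : ℤ, 1 ≤ w → w ≤ (n : ℤ) →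
      1 ≤ z → z ≤ (n : ℤ) → ((γ : ℕ) : ℤ) ∣ z - w → ∃ ℓ, HasWalk n S T ℓ w z := by
    intro γ hγ
    rcases List.mem_append.mp hγ with hm | hm
    · obtain ⟨s, hsl, rfl⟩ := List.mem_map.mp hm
      have hs : s ∈ S := Finset.mem_toList.mp hsl
      exact ⟨Or.inl (Nat.gcd_dvd_right s t1), fun w z hw1 hwn hz1 hzn hzw =>
        hop s t1 hs ht1T (hSrange s hs).1 ht1pos (hst1 s hs) w z hw1 hwn hz1 hzn hzw⟩
    · obtain ⟨t, htl, rfl⟩ := List.mem_map.mp hm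
      have ht : t ∈ T := Finset.mem_toList.mp htl
      exact ⟨Or.inr (Nat.gcd_dvd_left s1 t), fun w z hw1 hwn hz1 hzn hzw =>
        hop s1 t hs1S ht hs1pos (hTrange t ht).1 (hs1t t ht) w z hw1 hwn hz1 hzn hzw⟩
  set H := Γl.foldr Nat.gcd (Nat.gcd s1 t1) with hHdef
  have hHs1 : H ∣ s1 := (foldr_gcd_dvd_seed Γl _).trans (Nat.gcd_dvd_left s1 t1)
  have hHd : H ∣ d := by
    rw [hd]
    refine Finset.dvd_gcd ?_
    rintro ⟨s, t⟩ hpmem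
    obtain ⟨hs, ht⟩ := Finset.mem_product.mp hpmem
    have h1 : H ∣ s := by
      have hmem : Nat.gcd s t1 ∈ Γl := List.mem_append_left _
        (List.mem_map.mpr ⟨s, Finset.mem_toList.mpr hs, rfl⟩)
      exact (foldr_gcd_dvd_mem Γl _ _ hmem).trans (Nat.gcd_dvd_left s t1)
    have h2 : H ∣ t := by
      have hmem : Nat.gcd s1 t ∈ Γl := List.mem_append_right _
        (List.mem_map.mpr ⟨t, Finset.mem_toList.mpr ht, rfl⟩)
      exact (foldr_gcd_dvd_mem Γl _ _ hmem).trans (Nat.gcd_dvd_right s1 t)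
    exact Nat.dvd_add h1 h2
  have hHxu : ((H : ℕ) : ℤ) ∣ x - u := by
    have h1 : ((H : ℕ) : ℤ) ∣ x - u - p * s1 :=
      dvd_trans (by exact_mod_cast hHd) hdvd
    have h2 : ((H : ℕ) : ℤ) ∣ (p : ℤ) * s1 := Dvd.dvd.mul_left (by exact_mod_cast hHs1) _
    have := dvd_add h1 h2
    have heq : x - u - p * s1 + (p : ℤ) * s1 = x - u := by ring
    rwa [heq] at this
  have hex : ∃ ℓ, HasWalk n S T ℓ u x :=
    reach_aux s1 t1 hs1pos ht1pos hs1n ht1n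
      (fun w z hw1 hwn hz1 hzn hzw =>
        hop s1 t1 hs1S ht1T hs1pos ht1pos hs1t1 w z hw1 hwn hz1 hzn hzw)
      Γl hhopprop u x hu1 hun hx1 hxn hHxu
  set ℓ0 := Nat.find hex with hℓ0def
  have hwalk0 : HasWalk n S T ℓ0 u x := Nat.find_spec hex
  have hℓ0B : ℓ0 ≤ B := by
    have hFeq : F (u, x) = ℓ0 := dif_pos hex
    have hmemP : (u, x) ∈ P := Finset.mem_product.mpr ⟨hu, hx⟩
    have := Finset.le_sup (f := F) hmemP
    omega
  have hle : ℓ0 ≤ p := by omega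
  -- residue bookkeeping
  have hw1 := inv d s1 t1 hs1S ht1T hpair ℓ0 u x hwalk0
  have hdiffZ : (d : ℤ) ∣ ((p - ℓ0 : ℕ) : ℤ) * s1 := by
    have := dvd_sub hw1 hdvd
    have heq : x - u - ℓ0 * s1 - (x - u - p * s1) = ((p - ℓ0 : ℕ) : ℤ) * s1 := by
      rw [Nat.cast_sub hle]; ring
    rwa [heq] at this
  have hdiffN : d ∣ (p - ℓ0) * s1 := by exact_mod_cast hdiffZ
  have hediv : e ∣ p - ℓ0 := by
    have h1 : e * g ∣ ((p - ℓ0) * s1') * g := by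
      have : (p - ℓ0) * s1 = ((p - ℓ0) * s1') * g := by rw [hs1g]; ring
      rw [this] at hdiffN
      rw [hde] at hdiffN
      calc e * g = g * e := Nat.mul_comm e g
        _ ∣ _ := hdiffN
    have h2 : e ∣ (p - ℓ0) * s1' := (Nat.mul_dvd_mul_iff_right hgpos).mp h1
    exact hecop.dvd_of_dvd_mul_right h2
  have hhdiv : h ∣ p - ℓ0 := hhe.trans hediv
  have hNle : N ≤ p - ℓ0 := by omega
  obtain ⟨f, hf⟩ := hN (p - ℓ0) hNle hhdiv
  have hgadget : ∀ γ ∈ G, ∀ k : ℕ, HasWalk n S T (k * γ) x x := by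
    intro γ hγ k
    rcases Finset.mem_union.mp hγ with hm | hm
    · obtain ⟨s, hs, rfl⟩ := Finset.mem_image.mp hm
      exact gadget s t1 hs ht1T (hSrange s hs).1 ht1pos (hst1 s hs) x hx1 hxn k
    · obtain ⟨t, ht, rfl⟩ := Finset.mem_image.mp hm
      exact gadget s1 t hs1S ht hs1pos (hTrange t ht).1 (hs1t t ht) x hx1 hxn k
  have hpadwalk : HasWalk n S T (p - ℓ0) x x := by
    rw [hf]
    exact pad x hx1 hxn f G hgadget
  have := hasWalk_append hwalk0 hpadwalk
  have heq : ℓ0 + (p - ℓ0) = p := by omega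
  rwa [heq] at this

end Toep

/-- If `max S + min T ≤ n` and `min S + max T ≤ n`, then for all
sufficiently large `m`, distinct vertices `u, v` are adjacent in `C^m(D)` iff
`u ≡ v (mod d)` where `d = gcd{s + t : s ∈ S, t ∈ T}`. -/
theorem limit_competition_graph (n : ℕ) (hn : 2 ≤ n) (S T : Finset ℕ)
    (hS : S.Nonempty) (hT : T.Nonempty)
    (hSsub : S ⊆ Finset.Icc 1 (n - 1)) (hTsub : T ⊆ Finset.Icc 1 (n - 1))
    (hST1 : S.max' hS + T.min' hT ≤ n) (hST2 : S.min' hS + T.max' hT ≤ n)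
    (d : ℕ) (hd : d = (S ×ˢ T).gcd (fun p => p.1 + p.2)) :
    ∃ M : ℕ, 0 < M ∧ ∀ m : ℕ, M ≤ m →
      ∀ u ∈ Finset.Icc (1 : ℤ) (n : ℤ), ∀ v ∈ Finset.Icc (1 : ℤ) (n : ℤ), u ≠ v →
        (CompAdj n S T m u v ↔ (d : ℤ) ∣ u - v) := by
  classical
  set s1 := S.min' hS with hs1def
  set t1 := T.min' hT with ht1def
  have hs1S : s1 ∈ S := S.min'_mem hS
  have ht1T : t1 ∈ T := T.min'_mem hT
  have hs1pos : 1 ≤ s1 := (Finset.mem_Icc.mp (hSsub hs1S)).1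
  have ht1pos : 1 ≤ t1 := (Finset.mem_Icc.mp (hTsub ht1T)).1
  have hpair : ∀ s ∈ S, ∀ t ∈ T, d ∣ s + t := by
    intro s hs t ht
    rw [hd]
    exact Finset.gcd_dvd (show (s, t) ∈ S ×ˢ T from Finset.mem_product.mpr ⟨hs, ht⟩)
  have hdpos : 0 < d := by
    rcases Nat.eq_zero_or_pos d with h0 | h
    · exfalso
      have := hpair s1 hs1S t1 ht1T
      rw [h0] at this
      simp at this
      omega
    · exact h
  have hs1t1n : s1 + t1 ≤ n :=
    le_trans (Nat.add_le_add_right (S.le_max' s1 hs1S) t1) hST1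
  have hdn : d ≤ n :=
    le_trans (Nat.le_of_dvd (by omega) (hpair s1 hs1S t1 ht1T)) hs1t1n
  obtain ⟨M, hMpos, hkey⟩ := Toep.key n hn S T hS hT hSsub hTsub hST1 hST2 d hd
  refine ⟨M, hMpos, fun m hm u hu v hv huv => ?_⟩
  constructor
  · rintro ⟨-, x, hwu, hwv⟩
    have h1 := Toep.inv d s1 t1 hs1S ht1T hpair m u x hwu
    have h2 := Toep.inv d s1 t1 hs1S ht1T hpair m v x hwv
    have := dvd_sub h2 h1
    have heq : x - v - m * s1 - (x - u - m * s1) = u - v := by ring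
    rwa [heq] at this
  · intro hduv
    refine ⟨huv, ?_⟩
    have hdZ : (0 : ℤ) < (d : ℤ) := by exact_mod_cast hdpos
    set x : ℤ := (u - 1 + (m : ℤ) * s1) % (d : ℤ) + 1 with hxdef
    have hx1 : 1 ≤ x := by
      have := Int.emod_nonneg (u - 1 + (m : ℤ) * s1) (ne_of_gt hdZ)
      rw [hxdef]; linarith
    have hxn : x ≤ (n : ℤ) := by
      have h1 := Int.emod_lt_of_pos (u - 1 + (m : ℤ) * s1) hdZ
      have h2 : (d : ℤ) ≤ (n : ℤ) := by exact_mod_cast hdn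
      rw [hxdef]; linarith
    have hxmem : x ∈ Finset.Icc (1 : ℤ) (n : ℤ) := Finset.mem_Icc.mpr ⟨hx1, hxn⟩
    have hdx : (d : ℤ) ∣ x - u - m * s1 := by
      refine ⟨-((u - 1 + (m : ℤ) * s1) / d), ?_⟩
      rw [hxdef]
      have := Int.emod_def (u - 1 + (m : ℤ) * s1) (d : ℤ)
      linarith
    have hdxv : (d : ℤ) ∣ x - v - m * s1 := by
      have := dvd_add hdx hduv
      have heq : x - u - m * s1 + (u - v) = x - v - m * s1 := by ring
      rwa [heq] at this
    exact ⟨x, hkey m hm u x hu hxmem hdx, hkey m hm v x hv hxmem hdxv⟩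
end

section
/- Let S = {s_1 < ⋯ < s_{k_1}} and T = {t_1 < ⋯ < t_{k_2}} be nonempty subsets of {1, …, n−1}, let d = gcd{s + t : s ∈ S, t ∈ T}, and for a positive integer i let P_i = {ℓ ∈ ℤ : −(n−1) ≤ ℓ ≤ n−1 and ℓ ≡ i·s_1 (mod d)}. Then for every integer i ≥ 2, P_i = {ℓ ∈ ℤ : −(n−1) ≤ ℓ ≤ n−1, and ℓ − s_1 ∈ P_{i−1} or ℓ + t_1 ∈ P_{i−1}}. -/
/-- With `P_i = {ℓ ∈ [−(n−1), n−1] : ℓ ≡ i·s_1 (mod d)}`, for every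
`i ≥ 2` we have `P_i = {ℓ ∈ [−(n−1), n−1] : ℓ − s_1 ∈ P_{i−1} or ℓ + t_1 ∈ P_{i−1}}`. -/
theorem P_recursion (n k₁ k₂ : ℕ) (hn : 2 ≤ n)
    (s : Fin (k₁ + 1) → ℕ) (t : Fin (k₂ + 1) → ℕ)
    (hs : StrictMono s) (ht : StrictMono t)
    (hsmem : ∀ i, s i ∈ Finset.Icc 1 (n - 1)) (htmem : ∀ j, t j ∈ Finset.Icc 1 (n - 1))
    (d : ℕ)
    (hd : d = Finset.univ.gcd (fun p : Fin (k₁ + 1) × Fin (k₂ + 1) => s p.1 + t p.2))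
    (P : ℕ → Set ℤ)
    (hP : ∀ i, P i =
      {ℓ : ℤ | -((n : ℤ) - 1) ≤ ℓ ∧ ℓ ≤ (n : ℤ) - 1 ∧ (d : ℤ) ∣ ℓ - (i : ℤ) * (s 0 : ℤ)})
    (i : ℕ) (hi : 2 ≤ i) :
    P i = {ℓ : ℤ | -((n : ℤ) - 1) ≤ ℓ ∧ ℓ ≤ (n : ℤ) - 1 ∧
      (ℓ - (s 0 : ℤ) ∈ P (i - 1) ∨ ℓ + (t 0 : ℤ) ∈ P (i - 1))} := by
  have hdvd : (d : ℤ) ∣ (s 0 : ℤ) + (t 0 : ℤ) := by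
    have := Finset.gcd_dvd (f := fun p : Fin (k₁ + 1) × Fin (k₂ + 1) => s p.1 + t p.2)
      (Finset.mem_univ ((0 : Fin (k₁ + 1)), (0 : Fin (k₂ + 1))))
    rw [← hd] at this
    exact_mod_cast Int.natCast_dvd_natCast.mpr this
  have hcast : ((i - 1 : ℕ) : ℤ) = (i : ℤ) - 1 := by
    have : 1 ≤ i := by omega
    omega
  have hs1 : 1 ≤ s 0 ∧ s 0 ≤ n - 1 := Finset.mem_Icc.mp (hsmem 0)
  have ht1 : 1 ≤ t 0 ∧ t 0 ≤ n - 1 := Finset.mem_Icc.mp (htmem 0)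
  have hs1' : 1 ≤ (s 0 : ℤ) ∧ (s 0 : ℤ) ≤ (n : ℤ) - 1 := by
    constructor <;> [exact_mod_cast hs1.1; omega]
  have ht1' : 1 ≤ (t 0 : ℤ) ∧ (t 0 : ℤ) ≤ (n : ℤ) - 1 := by
    constructor <;> [exact_mod_cast ht1.1; omega]
  ext ℓ
  simp only [hP, Set.mem_setOf_eq, hcast]
  constructor
  · rintro ⟨h1, h2, h3⟩
    refine ⟨h1, h2, ?_⟩
    by_cases hc : -((n : ℤ) - 1) ≤ ℓ - (s 0 : ℤ)
    · left
      refine ⟨hc, by omega, ?_⟩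
      have : ℓ - (s 0 : ℤ) - ((i : ℤ) - 1) * (s 0 : ℤ) = ℓ - (i : ℤ) * (s 0 : ℤ) := by ring
      rw [this]; exact h3
    · right
      refine ⟨by omega, by omega, ?_⟩
      have : ℓ + (t 0 : ℤ) - ((i : ℤ) - 1) * (s 0 : ℤ)
          = (ℓ - (i : ℤ) * (s 0 : ℤ)) + ((s 0 : ℤ) + (t 0 : ℤ)) := by ring
      rw [this]; exact dvd_add h3 hdvd
  · rintro ⟨h1, h2, (⟨_, _, h3⟩ | ⟨_, _, h3⟩)⟩
    · refine ⟨h1, h2, ?_⟩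
      have : ℓ - (i : ℤ) * (s 0 : ℤ) = ℓ - (s 0 : ℤ) - ((i : ℤ) - 1) * (s 0 : ℤ) := by ring
      rw [this]; exact h3
    · refine ⟨h1, h2, ?_⟩
      have : ℓ - (i : ℤ) * (s 0 : ℤ)
          = (ℓ + (t 0 : ℤ) - ((i : ℤ) - 1) * (s 0 : ℤ)) - ((s 0 : ℤ) + (t 0 : ℤ)) := by ring
      rw [this]; exact dvd_sub h3 hdvd
end

section
/- Let D be the Toeplitz digraph of T_n⟨S;T⟩ with max S + min T ≤ n and min S + max T ≤ n. Then there exists a positive integer M such that for every integer m > M, existence of a directed walk of length m between two vertices depends only on their difference: for all vertices u, v, u', v' of D with v − u = v' − u', there is a directed (u,v)-walk of length m in D if and only if there is a directed (u',v')-walk of length m in D. (That is, every sufficiently high Boolean power of the matrix T_n⟨S;T⟩ is a Toeplitz matrix.) -/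
namespace ToepAux

variable {n : ℕ} {S T : Finset ℕ}

lemma hasWalk_zero (u : ℤ) : HasWalk n S T 0 u u :=
  ⟨fun _ => u, rfl, rfl, by omega⟩

lemma hasWalk_congr {m m' : ℕ} {u v : ℤ} (hw : HasWalk n S T m u v) (h : m = m') :
    HasWalk n S T m' u v := h ▸ hw

lemma hasWalk_cons {m : ℕ} {u w v : ℤ} (h : ToepArc n S T u w)
    (hw : HasWalk n S T m w v) : HasWalk n S T (m + 1) u v := by
  obtain ⟨f, h0, hm, harc⟩ := hw
  refine ⟨fun i => if i = 0 then u else f (i - 1), by simp, by simp [hm], ?_⟩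
  intro i hi
  rcases Nat.eq_zero_or_pos i with rfl | hipos
  · simpa [h0] using h
  · have h1 : ¬ (i = 0) := by omega
    have h2 : ¬ (i + 1 = 0) := by omega
    simp only [h1, h2, if_false]
    have : i - 1 < m := by omega
    have := harc (i - 1) this
    have he : i - 1 + 1 = i + 1 - 1 := by omega
    rwa [he] at this

lemma hasWalk_head {m : ℕ} {u v : ℤ} (h : HasWalk n S T (m + 1) u v) :
    ∃ w, ToepArc n S T u w ∧ HasWalk n S T m w v := by
  obtain ⟨f, h0, hm, harc⟩ := h
  refine ⟨f 1, h0 ▸ harc 0 (by omega), fun i => f (i + 1), rfl, hm, ?_⟩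
  intro i hi
  exact harc (i + 1) (by omega)

lemma hasWalk_append {m₁ m₂ : ℕ} {u w v : ℤ} (h1 : HasWalk n S T m₁ u w)
    (h2 : HasWalk n S T m₂ w v) : HasWalk n S T (m₁ + m₂) u v := by
  induction m₁ generalizing u with
  | zero =>
    obtain ⟨f, h0, hm, -⟩ := h1
    have : u = w := by rw [← h0, hm]
    simpa [this] using h2
  | succ k ih =>
    obtain ⟨w', harc, hw'⟩ := hasWalk_head h1
    exact hasWalk_congr (hasWalk_cons harc (ih hw')) (by omega)

lemma arc_up {u : ℤ} {s : ℕ} (hs : s ∈ S) (h1 : 1 ≤ u) (h2 : u + (s : ℤ) ≤ n) :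
    ToepArc n S T u (u + (s : ℤ)) := by
  refine ⟨?_, ?_, Or.inl ⟨s, hs, rfl⟩⟩ <;> simp only [Finset.mem_Icc] <;>
    constructor <;> omega

lemma arc_down {u : ℤ} {t : ℕ} (ht : t ∈ T) (h1 : 1 ≤ u - (t : ℤ)) (h2 : u ≤ n) :
    ToepArc n S T u (u - (t : ℤ)) := by
  refine ⟨?_, ?_, Or.inr ⟨t, ht, rfl⟩⟩ <;> simp only [Finset.mem_Icc] <;>
    constructor <;> omega

lemma greedy (hS : S.Nonempty) (hT : T.Nonempty)
    (hSsub : S ⊆ Finset.Icc 1 (n - 1)) (hTsub : T ⊆ Finset.Icc 1 (n - 1))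
    (hST1 : S.max' hS + T.min' hT ≤ n) :
    ∀ N A B : ℕ, ∀ u v : ℤ, A + B ≤ N →
      1 ≤ u → u ≤ n → 1 ≤ v → v ≤ n →
      (A : ℤ) * (S.min' hS : ℤ) - (B : ℤ) * (T.min' hT : ℤ) = v - u →
      HasWalk n S T (A + B) u v := by
  set a := S.min' hS with hadef
  set b := T.min' hT with hbdef
  have ha : a ∈ S := S.min'_mem hS
  have hb : b ∈ T := T.min'_mem hT
  have haI : 1 ≤ a ∧ a ≤ n - 1 := Finset.mem_Icc.mp (hSsub ha)
  have hbI : 1 ≤ b ∧ b ≤ n - 1 := Finset.mem_Icc.mp (hTsub hb)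
  have hab : a + b ≤ n := le_trans (by gcongr; exact S.le_max' a ha) hST1
  have ha1 : (1 : ℤ) ≤ (a : ℤ) := by exact_mod_cast haI.1
  have hb1 : (1 : ℤ) ≤ (b : ℤ) := by exact_mod_cast hbI.1
  intro N
  induction N with
  | zero =>
    intro A B u v hN hu1 hu2 hv1 hv2 heq
    have hA : A = 0 := by omega
    have hB : B = 0 := by omega
    subst hA; subst hB
    simp only [Nat.cast_zero, zero_mul, sub_zero, zero_sub] at heq
    have : u = v := by omega
    subst this
    exact hasWalk_zero u
  | succ N ih =>
    intro A B u v hN hu1 hu2 hv1 hv2 heq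
    rcases Nat.eq_zero_or_pos B with hB | hB
    · subst hB
      rcases Nat.eq_zero_or_pos A with hA | hA
      · subst hA
        simp only [Nat.cast_zero, zero_mul, sub_zero, zero_sub] at heq
        have : u = v := by omega
        subst this
        exact hasWalk_zero u
      · obtain ⟨A', rfl⟩ := Nat.exists_eq_succ_of_ne_zero (by omega : A ≠ 0)
        have hAa : v - u = ((A' : ℤ) + 1) * (a : ℤ) := by push_cast at heq ⊢; linarith
        have hua : u + (a : ℤ) ≤ n := by
          nlinarith [mul_nonneg (by positivity : (0:ℤ) ≤ (A':ℤ)) (by linarith : (0:ℤ) ≤ (a:ℤ))]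
        have harc := arc_up (n := n) (T := T) ha hu1 hua
        have hrec : HasWalk n S T (A' + 0) (u + (a:ℤ)) v := by
          refine ih A' 0 (u + a) v (by omega) (by omega) (by omega) hv1 hv2 ?_
          push_cast at heq ⊢; linarith
        exact hasWalk_congr (hasWalk_cons harc hrec) (by omega)
    · obtain ⟨B', rfl⟩ := Nat.exists_eq_succ_of_ne_zero (by omega : B ≠ 0)
      rcases Nat.eq_zero_or_pos A with hA | hA
      · subst hA
        have hBb : u - v = ((B' : ℤ) + 1) * (b : ℤ) := by push_cast at heq ⊢; linarith
        have hub : 1 + (b : ℤ) ≤ u := by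
          nlinarith [mul_nonneg (by positivity : (0:ℤ) ≤ (B':ℤ)) (by linarith : (0:ℤ) ≤ (b:ℤ))]
        have harc := arc_down (n := n) (S := S) hb (by omega) hu2
        have hrec : HasWalk n S T (0 + B') (u - (b:ℤ)) v := by
          refine ih 0 B' (u - b) v (by omega) (by omega) (by omega) hv1 hv2 ?_
          push_cast at heq ⊢; linarith
        exact hasWalk_congr (hasWalk_cons harc hrec) (by omega)
      · obtain ⟨A', rfl⟩ := Nat.exists_eq_succ_of_ne_zero (by omega : A ≠ 0)
        by_cases hcase : u + (a : ℤ) ≤ n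
        · have harc := arc_up (n := n) (T := T) ha hu1 hcase
          have hrec : HasWalk n S T (A' + (B' + 1)) (u + (a:ℤ)) v := by
            refine ih A' (B' + 1) (u + a) v (by omega) (by omega) (by omega) hv1 hv2 ?_
            push_cast at heq ⊢; linarith
          exact hasWalk_congr (hasWalk_cons harc hrec) (by omega)
        · have hub : 1 ≤ u - (b : ℤ) := by
            by_contra hcon
            have h1 : (n : ℤ) < u + a := by omega
            have h2 : u ≤ (b : ℤ) := by omega
            have : (a : ℤ) + b ≤ n := by exact_mod_cast hab
            omega
          have harc := arc_down (n := n) (S := S) hb hub hu2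
          have hrec : HasWalk n S T ((A' + 1) + B') (u - (b:ℤ)) v := by
            refine ih (A' + 1) B' (u - b) v (by omega) hub (by omega) hv1 hv2 ?_
            push_cast at heq ⊢; linarith
          exact hasWalk_congr (hasWalk_cons harc hrec) (by omega)


lemma prepUp (hT : T.Nonempty) {s : ℕ} (hsS : s ∈ S) (hs1 : 1 ≤ s)
    (hsb : s + T.min' hT ≤ n) (hb1 : 1 ≤ T.min' hT) :
    ∀ N : ℕ, ∀ u : ℤ, 1 ≤ u → u ≤ n → u - (N : ℤ) * (T.min' hT : ℤ) ≤ (n : ℤ) - s →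
      ∃ j : ℕ, j ≤ N ∧ HasWalk n S T j u (u - (j : ℤ) * (T.min' hT : ℤ)) ∧
        1 ≤ u - (j : ℤ) * (T.min' hT : ℤ) ∧ u - (j : ℤ) * (T.min' hT : ℤ) ≤ (n : ℤ) - s := by
  set b := T.min' hT with hbdef
  have hb : b ∈ T := T.min'_mem hT
  intro N
  induction N with
  | zero =>
    intro u hu1 hu2 hend
    exact ⟨0, le_refl 0, by simpa using hasWalk_zero u, by simpa using hu1, by simpa using hend⟩
  | succ N ih =>
    intro u hu1 hu2 hend
    by_cases hc : u ≤ (n : ℤ) - s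
    · exact ⟨0, by omega, by simpa using hasWalk_zero u, by simpa using hu1, by simpa using hc⟩
    · have hub : 1 ≤ u - (b : ℤ) := by
        have hc' : (n : ℤ) - s < u := by omega
        have : (s : ℤ) + b ≤ n := by exact_mod_cast hsb
        omega
      have harc := arc_down (n := n) (S := S) hb hub hu2
      have hend' : (u - b) - (N : ℤ) * (b : ℤ) ≤ (n : ℤ) - s := by
        push_cast at hend ⊢; linarith
      obtain ⟨j, hj, hwalk, h1, h2⟩ := ih (u - b) hub (by omega) hend'
      have he : (u - b) - (j : ℤ) * (b : ℤ) = u - ((j + 1 : ℕ) : ℤ) * (b : ℤ) := by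
        push_cast; ring
      refine ⟨j + 1, by omega, ?_, ?_, ?_⟩
      · have := hasWalk_cons harc hwalk
        rwa [he] at this
      · rwa [he] at h1
      · rwa [he] at h2

lemma prepDown (hS : S.Nonempty) {t : ℕ} (htT : t ∈ T) (ht1 : 1 ≤ t)
    (hta : S.min' hS + t ≤ n) (ha1 : 1 ≤ S.min' hS) :
    ∀ N : ℕ, ∀ u : ℤ, 1 ≤ u → u ≤ n → (1 : ℤ) + t ≤ u + (N : ℤ) * (S.min' hS : ℤ) →
      ∃ j : ℕ, j ≤ N ∧ HasWalk n S T j u (u + (j : ℤ) * (S.min' hS : ℤ)) ∧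
        (1 : ℤ) + t ≤ u + (j : ℤ) * (S.min' hS : ℤ) ∧ u + (j : ℤ) * (S.min' hS : ℤ) ≤ (n : ℤ) := by
  set a := S.min' hS with hadef
  have ha : a ∈ S := S.min'_mem hS
  intro N
  induction N with
  | zero =>
    intro u hu1 hu2 hend
    exact ⟨0, le_refl 0, by simpa using hasWalk_zero u, by simpa using hend, by simpa using hu2⟩
  | succ N ih =>
    intro u hu1 hu2 hend
    by_cases hc : (1 : ℤ) + t ≤ u
    · exact ⟨0, by omega, by simpa using hasWalk_zero u, by simpa using hc, by simpa using hu2⟩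
    · have hua : u + (a : ℤ) ≤ n := by
        have : (a : ℤ) + t ≤ n := by exact_mod_cast hta
        omega
      have harc := arc_up (n := n) (T := T) ha hu1 hua
      have hend' : (1 : ℤ) + t ≤ (u + a) + (N : ℤ) * (a : ℤ) := by
        push_cast at hend ⊢; linarith
      obtain ⟨j, hj, hwalk, h1, h2⟩ := ih (u + a) (by omega) hua hend'
      have he : (u + a) + (j : ℤ) * (a : ℤ) = u + ((j + 1 : ℕ) : ℤ) * (a : ℤ) := by
        push_cast; ring
      refine ⟨j + 1, by omega, ?_, ?_, ?_⟩
      · have := hasWalk_cons harc hwalk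
        rwa [he] at this
      · rwa [he] at h1
      · rwa [he] at h2


lemma realize (hn : 2 ≤ n) (hS : S.Nonempty) (hT : T.Nonempty)
    (hSsub : S ⊆ Finset.Icc 1 (n - 1)) (hTsub : T ⊆ Finset.Icc 1 (n - 1))
    (hST1 : S.max' hS + T.min' hT ≤ n) (hST2 : S.min' hS + T.max' hT ≤ n) :
    ∀ (R : Multiset ℤ), ∀ A B : ℕ, ∀ u v : ℤ,
      1 ≤ u → u ≤ n → 1 ≤ v → v ≤ n →
      (∀ x ∈ R, (∃ s ∈ S, x = (s : ℤ)) ∨ (∃ t ∈ T, x = -(t : ℤ))) →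
      ((A : ℤ) * (S.min' hS : ℤ) - (B : ℤ) * (T.min' hT : ℤ) + R.sum = v - u) →
      n * Multiset.card R ≤ A → n * Multiset.card R ≤ B →
      HasWalk n S T (A + B + Multiset.card R) u v := by
  have ha : S.min' hS ∈ S := S.min'_mem hS
  have hb : T.min' hT ∈ T := T.min'_mem hT
  have haI := Finset.mem_Icc.mp (hSsub ha)
  have hbI := Finset.mem_Icc.mp (hTsub hb)
  intro R
  induction R using Multiset.induction_on with
  | empty =>
    intro A B u v hu1 hu2 hv1 hv2 hmem hbal hA hB
    have := greedy hS hT hSsub hTsub hST1 (A + B) A B u v le_rfl hu1 hu2 hv1 hv2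
      (by simpa using hbal)
    exact hasWalk_congr this (by simp)
  | cons x R ihR =>
    intro A B u v hu1 hu2 hv1 hv2 hmem hbal hA hB
    have hcards : n * (Multiset.card R + 1) = n * Multiset.card R + n := by ring
    have hcard : Multiset.card (x ::ₘ R) = Multiset.card R + 1 := Multiset.card_cons x R
    rw [hcard, hcards] at hA hB
    rcases hmem x (Multiset.mem_cons_self x R) with ⟨s, hsS, rfl⟩ | ⟨t, htT, rfl⟩
    · -- up-step s
      have hsI := Finset.mem_Icc.mp (hSsub hsS)
      have hsb : s + T.min' hT ≤ n := le_trans (by gcongr; exact S.le_max' s hsS) hST1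
      have hb1 : (1 : ℤ) ≤ (T.min' hT : ℤ) := by exact_mod_cast hbI.1
      have hnb : (n : ℤ) * 1 ≤ (n : ℤ) * (T.min' hT : ℤ) :=
        mul_le_mul_of_nonneg_left hb1 (by positivity)
      obtain ⟨j, hj, hwalk, h1, h2⟩ := prepUp hT hsS hsI.1 hsb hbI.1 n u hu1 hu2 (by omega)
      set b := T.min' hT
      set a := S.min' hS
      have harc : ToepArc n S T (u - (j:ℤ)*(b:ℤ)) ((u - (j:ℤ)*(b:ℤ)) + (s:ℤ)) :=
        arc_up hsS h1 (by omega)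
      have hjB : j ≤ B := by omega
      have hrec : HasWalk n S T (A + (B - j) + Multiset.card R)
          ((u - (j:ℤ)*(b:ℤ)) + (s:ℤ)) v := by
        refine ihR A (B - j) _ v (by omega) (by omega) hv1 hv2
          (fun y hy => hmem y (Multiset.mem_cons_of_mem hy)) ?_ (by omega) (by omega)
        have hsum : ((s:ℤ) ::ₘ R).sum = (s : ℤ) + R.sum := by simp [Multiset.sum_cons]
        rw [hsum] at hbal
        push_cast [Nat.cast_sub hjB]
        push_cast at hbal
        linarith
      have hw := hasWalk_append hwalk (hasWalk_cons harc hrec)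
      exact hasWalk_congr hw (by rw [hcard]; omega)
    · -- down-step t
      have htI := Finset.mem_Icc.mp (hTsub htT)
      have hta : S.min' hS + t ≤ n :=
        le_trans (by gcongr; exact T.le_max' t htT) hST2
      have ha1 : (1 : ℤ) ≤ (S.min' hS : ℤ) := by exact_mod_cast haI.1
      have hna : (n : ℤ) * 1 ≤ (n : ℤ) * (S.min' hS : ℤ) :=
        mul_le_mul_of_nonneg_left ha1 (by positivity)
      have htn : (t : ℤ) ≤ (n : ℤ) - 1 := by
        have := htI.2; omega
      obtain ⟨j, hj, hwalk, h1, h2⟩ := prepDown hS htT htI.1 hta haI.1 n u hu1 hu2 (by omega)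
      set b := T.min' hT
      set a := S.min' hS
      have harc : ToepArc n S T (u + (j:ℤ)*(a:ℤ)) ((u + (j:ℤ)*(a:ℤ)) - (t:ℤ)) :=
        arc_down htT (by omega) h2
      have hjA : j ≤ A := by omega
      have hrec : HasWalk n S T ((A - j) + B + Multiset.card R)
          ((u + (j:ℤ)*(a:ℤ)) - (t:ℤ)) v := by
        refine ihR (A - j) B _ v (by omega) (by omega) hv1 hv2
          (fun y hy => hmem y (Multiset.mem_cons_of_mem hy)) ?_ (by omega) (by omega)
        have hsum : ((-(t:ℤ)) ::ₘ R).sum = -(t : ℤ) + R.sum := by simp [Multiset.sum_cons]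
        rw [hsum] at hbal
        push_cast [Nat.cast_sub hjA]
        push_cast at hbal
        linarith
      have hw := hasWalk_append hwalk (hasWalk_cons harc hrec)
      exact hasWalk_congr hw (by rw [hcard]; omega)


lemma count_split (hSsub : S ⊆ Finset.Icc 1 (n - 1)) (hTsub : T ⊆ Finset.Icc 1 (n - 1))
    {L : Multiset ℤ}
    (hmem : ∀ x ∈ L, (∃ s ∈ S, x = (s:ℤ)) ∨ (∃ t ∈ T, x = -(t:ℤ))) (g : ℤ → ℤ) :
    (L.map g).sum = ∑ s ∈ S, (L.count (s:ℤ)) • g (s:ℤ)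
      + ∑ t ∈ T, (L.count (-(t:ℤ))) • g (-(t:ℤ)) := by
  classical
  have base := Finset.sum_multiset_map_count L g
  have hLF : L.toFinset ⊆ S.image (fun s : ℕ => (s:ℤ)) ∪ T.image (fun t : ℕ => -(t:ℤ)) := by
    intro x hx
    rcases hmem x (Multiset.mem_toFinset.mp hx) with ⟨s, hs, rfl⟩ | ⟨t, ht, rfl⟩
    · exact Finset.mem_union_left _ (Finset.mem_image_of_mem _ hs)
    · exact Finset.mem_union_right _ (Finset.mem_image_of_mem _ ht)
  have hext : ∑ y ∈ L.toFinset, L.count y • g y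
      = ∑ y ∈ (S.image (fun s : ℕ => (s:ℤ)) ∪ T.image (fun t : ℕ => -(t:ℤ))), L.count y • g y := by
    refine Finset.sum_subset hLF (fun x _ hx => ?_)
    rw [Multiset.count_eq_zero_of_notMem (by simpa [Multiset.mem_toFinset] using hx), zero_smul]
  have hdisj : Disjoint (S.image (fun s : ℕ => (s:ℤ))) (T.image (fun t : ℕ => -(t:ℤ))) := by
    rw [Finset.disjoint_left]
    rintro x hx1 hx2
    obtain ⟨s, hs, rfl⟩ := Finset.mem_image.mp hx1
    obtain ⟨t, ht, hteq⟩ := Finset.mem_image.mp hx2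
    have h1 : 1 ≤ s := (Finset.mem_Icc.mp (hSsub hs)).1
    have h2 : 1 ≤ t := (Finset.mem_Icc.mp (hTsub ht)).1
    omega
  rw [base, hext, Finset.sum_union hdisj,
    Finset.sum_image (fun a _ b _ h => by exact_mod_cast h),
    Finset.sum_image (fun a _ b _ h => by omega)]

lemma count_card (hSsub : S ⊆ Finset.Icc 1 (n - 1)) (hTsub : T ⊆ Finset.Icc 1 (n - 1))
    {L : Multiset ℤ}
    (hmem : ∀ x ∈ L, (∃ s ∈ S, x = (s:ℤ)) ∨ (∃ t ∈ T, x = -(t:ℤ))) :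
    (Multiset.card L : ℤ) = (∑ s ∈ S, (L.count (s:ℤ) : ℤ))
      + ∑ t ∈ T, (L.count (-(t:ℤ)) : ℤ) := by
  have h := count_split hSsub hTsub hmem (fun _ => (1:ℤ))
  simpa [Multiset.map_const', Multiset.sum_replicate, nsmul_eq_mul] using h

lemma count_sum (hSsub : S ⊆ Finset.Icc 1 (n - 1)) (hTsub : T ⊆ Finset.Icc 1 (n - 1))
    {L : Multiset ℤ}
    (hmem : ∀ x ∈ L, (∃ s ∈ S, x = (s:ℤ)) ∨ (∃ t ∈ T, x = -(t:ℤ))) :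
    L.sum = (∑ s ∈ S, (L.count (s:ℤ) : ℤ) * (s:ℤ))
      - ∑ t ∈ T, (L.count (-(t:ℤ)) : ℤ) * (t:ℤ) := by
  have h := count_split hSsub hTsub hmem id
  simp only [nsmul_eq_mul, mul_neg, id, Multiset.map_id'] at h
  rw [h, Finset.sum_neg_distrib]
  ring


lemma walk_rep {m : ℕ} {u v : ℤ} (h : HasWalk n S T m u v) :
    ∃ L : Multiset ℤ, Multiset.card L = m ∧ L.sum = v - u ∧
      ∀ x ∈ L, (∃ s ∈ S, x = (s:ℤ)) ∨ (∃ t ∈ T, x = -(t:ℤ)) := by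
  obtain ⟨w, h0, hm, harc⟩ := h
  refine ⟨(Multiset.range m).map (fun i => w (i+1) - w i), by simp, ?_, ?_⟩
  · have he : ((Multiset.range m).map (fun i => w (i+1) - w i)).sum
        = ∑ i ∈ Finset.range m, (w (i+1) - w i) := rfl
    rw [he, Finset.sum_range_sub, h0, hm]
  · intro x hx
    simp only [Multiset.mem_map, Multiset.mem_range] at hx
    obtain ⟨i, hi, rfl⟩ := hx
    obtain ⟨-, -, h⟩ := harc i hi
    rcases h with ⟨s, hs, he⟩ | ⟨t, ht, he⟩
    · exact Or.inl ⟨s, hs, by omega⟩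
    · exact Or.inr ⟨t, ht, by omega⟩

set_option maxHeartbeats 1600000 in
lemma repToWalk (hn : 2 ≤ n) (hS : S.Nonempty) (hT : T.Nonempty)
    (hSsub : S ⊆ Finset.Icc 1 (n - 1)) (hTsub : T ⊆ Finset.Icc 1 (n - 1))
    (hST1 : S.max' hS + T.min' hT ≤ n) (hST2 : S.min' hS + T.max' hT ≤ n)
    {m : ℕ} {u v : ℤ} (hm : 100 * (n + 1)^4 < m)
    (hu1 : 1 ≤ u) (hu2 : u ≤ (n:ℤ)) (hv1 : 1 ≤ v) (hv2 : v ≤ (n:ℤ))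
    {L : Multiset ℤ} (hcard : Multiset.card L = m) (hsum : L.sum = v - u)
    (hmem : ∀ x ∈ L, (∃ s ∈ S, x = (s:ℤ)) ∨ (∃ t ∈ T, x = -(t:ℤ))) :
    HasWalk n S T m u v := by
  classical
  have ha : S.min' hS ∈ S := S.min'_mem hS
  have hb : T.min' hT ∈ T := T.min'_mem hT
  have haI := Finset.mem_Icc.mp (hSsub ha)
  have hbI := Finset.mem_Icc.mp (hTsub hb)
  set a := S.min' hS with hadef
  set b := T.min' hT with hbdef
  set P : ℕ := a + b with hPdef
  have hP0 : 0 < P := by omega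
  have hPZ : (P : ℤ) = (a : ℤ) + (b : ℤ) := by push_cast [hPdef]; ring
  -- count identities
  have E1 : (m : ℤ) = (∑ s ∈ S, (L.count (s:ℤ) : ℤ)) + ∑ t ∈ T, (L.count (-(t:ℤ)) : ℤ) := by
    rw [← hcard]; exact count_card hSsub hTsub hmem
  have E2 : v - u = (∑ s ∈ S, (L.count (s:ℤ) : ℤ) * (s:ℤ))
      - ∑ t ∈ T, (L.count (-(t:ℤ)) : ℤ) * (t:ℤ) := by
    rw [← hsum]; exact count_sum hSsub hTsub hmem
  -- reduced counts
  set rS : ℕ → ℕ := fun s => (L.count (s:ℤ)) % P with hrS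
  set rT : ℕ → ℕ := fun t => (L.count (-(t:ℤ))) % P with hrT
  set KS : ℤ := ∑ s ∈ S, (rS s : ℤ) with hKS
  set KT : ℤ := ∑ t ∈ T, (rT t : ℤ) with hKT
  set MS : ℤ := ∑ s ∈ S, (rS s : ℤ) * (s:ℤ) with hMS
  set MT : ℤ := ∑ t ∈ T, (rT t : ℤ) * (t:ℤ) with hMT
  set m₁ : ℤ := (m : ℤ) - KS - KT with hm₁
  set δ₁ : ℤ := (v - u) - MS + MT with hδ₁
  -- the rare-step multiset
  set R : Multiset ℤ := (S.val.bind fun s => Multiset.replicate (rS s) ((s:ℕ):ℤ))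
      + (T.val.bind fun t => Multiset.replicate (rT t) (-(t:ℤ))) with hR
  have cardR : (Multiset.card R : ℤ) = KS + KT := by
    have h1 : Multiset.card R = (∑ s ∈ S, rS s) + ∑ t ∈ T, rT t := by
      rw [hR, Multiset.card_add, Multiset.card_bind, Multiset.card_bind]
      simp only [Function.comp, Multiset.card_replicate]
      rfl
    rw [h1, hKS, hKT]
    push_cast
    ring
  have sumR : R.sum = MS - MT := by
    have h1 : R.sum = (∑ s ∈ S, (rS s) • ((s:ℕ):ℤ)) + ∑ t ∈ T, (rT t) • (-(t:ℤ)) := by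
      rw [hR, Multiset.sum_add, Multiset.sum_bind, Multiset.sum_bind]
      simp only [Multiset.sum_replicate]
      rfl
    rw [h1, hMS, hMT]
    simp only [smul_neg, nsmul_eq_mul, mul_neg]
    rw [Finset.sum_neg_distrib]
    ring
  have memR : ∀ x ∈ R, (∃ s ∈ S, x = (s:ℤ)) ∨ (∃ t ∈ T, x = -(t:ℤ)) := by
    intro z hz
    rw [hR, Multiset.mem_add] at hz
    rcases hz with hz | hz
    · obtain ⟨s, hs, hz⟩ := Multiset.mem_bind.mp hz
      exact Or.inl ⟨s, Finset.mem_def.mpr hs, Multiset.eq_of_mem_replicate hz⟩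
    · obtain ⟨t, ht, hz⟩ := Multiset.mem_bind.mp hz
      exact Or.inr ⟨t, Finset.mem_def.mpr ht, Multiset.eq_of_mem_replicate hz⟩
  -- divisibility
  have heqd : δ₁ + (b:ℤ) * m₁
      = (∑ s ∈ S, ((s:ℤ) + b) * ((L.count (s:ℤ) : ℤ) - (rS s : ℤ)))
      + ∑ t ∈ T, ((t:ℤ) - b) * ((rT t : ℤ) - (L.count (-(t:ℤ)) : ℤ)) := by
    have hS1 : ∑ s ∈ S, ((s:ℤ) + b) * ((L.count (s:ℤ) : ℤ) - (rS s : ℤ))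
        = ((∑ s ∈ S, (L.count (s:ℤ) : ℤ) * (s:ℤ)) + (b:ℤ) * (∑ s ∈ S, (L.count (s:ℤ) : ℤ)))
          - MS - (b:ℤ) * KS := by
      rw [hMS, hKS, Finset.mul_sum, Finset.mul_sum,
        ← Finset.sum_add_distrib, ← Finset.sum_sub_distrib, ← Finset.sum_sub_distrib]
      exact Finset.sum_congr rfl fun s _ => by ring
    have hT1 : ∑ t ∈ T, ((t:ℤ) - b) * ((rT t : ℤ) - (L.count (-(t:ℤ)) : ℤ))
        = ((MT - (b:ℤ) * KT) - (∑ t ∈ T, (L.count (-(t:ℤ)) : ℤ) * (t:ℤ)))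
          + (b:ℤ) * (∑ t ∈ T, (L.count (-(t:ℤ)) : ℤ)) := by
      rw [hMT, hKT, Finset.mul_sum, Finset.mul_sum,
        ← Finset.sum_sub_distrib, ← Finset.sum_sub_distrib, ← Finset.sum_add_distrib]
      exact Finset.sum_congr rfl fun t _ => by ring
    rw [hδ₁, hm₁, hS1, hT1]
    linear_combination E2 + (b:ℤ) * E1
  have hdvd : (P : ℤ) ∣ (δ₁ + (b:ℤ) * m₁) := by
    rw [heqd]
    apply dvd_add
    · refine Finset.dvd_sum fun s hs => ?_
      have hc : ((rS s : ℕ) : ℤ) = (L.count (s:ℤ) : ℤ) % (P : ℤ) := by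
        simp only [hrS]
        exact_mod_cast Int.natCast_mod _ _
      rw [hc]
      exact Dvd.dvd.mul_left (Int.dvd_self_sub_of_emod_eq rfl) _
    · refine Finset.dvd_sum fun t ht => ?_
      have hc : ((rT t : ℕ) : ℤ) = (L.count (-(t:ℤ)) : ℤ) % (P : ℤ) := by
        simp only [hrT]
        exact_mod_cast Int.natCast_mod _ _
      rw [hc]
      refine Dvd.dvd.mul_left (dvd_sub_comm.mp (Int.dvd_self_sub_of_emod_eq rfl)) _
  set x : ℤ := (δ₁ + (b:ℤ) * m₁) / P with hxdef
  have hx : x * P = δ₁ + (b:ℤ) * m₁ := Int.ediv_mul_cancel hdvd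
  set y : ℤ := m₁ - x with hydef
  have hyP : y * (P:ℤ) = (a:ℤ) * m₁ - δ₁ := by
    rw [hydef]; linear_combination m₁ * hPZ - hx
  -- bounds
  have hKS0 : 0 ≤ KS := by rw [hKS]; positivity
  have hKT0 : 0 ≤ KT := by rw [hKT]; positivity
  have hMS0 : 0 ≤ MS := by rw [hMS]; positivity
  have hMT0 : 0 ≤ MT := by rw [hMT]; positivity
  have hMSb : MS ≤ KS * (n:ℤ) := by
    rw [hMS, hKS, Finset.sum_mul]
    refine Finset.sum_le_sum fun s hsmem => ?_
    have hsle := (Finset.mem_Icc.mp (hSsub hsmem)).2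
    refine mul_le_mul_of_nonneg_left ?_ (by positivity)
    omega
  have hMTb : MT ≤ KT * (n:ℤ) := by
    rw [hMT, hKT, Finset.sum_mul]
    refine Finset.sum_le_sum fun t htmem => ?_
    have htle := (Finset.mem_Icc.mp (hTsub htmem)).2
    refine mul_le_mul_of_nonneg_left ?_ (by positivity)
    omega
  have hKb : KS + KT ≤ 4 * (n:ℤ)^2 := by
    have hP2n : P ≤ 2*n := by omega
    have h1 : (∑ s ∈ S, rS s) ≤ S.card * P := by
      calc ∑ s ∈ S, rS s ≤ ∑ _s ∈ S, P :=
            Finset.sum_le_sum (fun s _ => le_of_lt (by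
              simp only [hrS]; exact Nat.mod_lt _ hP0))
        _ = S.card * P := by rw [Finset.sum_const, smul_eq_mul]
    have h2 : (∑ t ∈ T, rT t) ≤ T.card * P := by
      calc ∑ t ∈ T, rT t ≤ ∑ _t ∈ T, P :=
            Finset.sum_le_sum (fun t _ => le_of_lt (by
              simp only [hrT]; exact Nat.mod_lt _ hP0))
        _ = T.card * P := by rw [Finset.sum_const, smul_eq_mul]
    have hScard : S.card ≤ n := by
      have := Finset.card_le_card hSsub
      rw [Nat.card_Icc] at this
      omega
    have hTcard : T.card ≤ n := by
      have := Finset.card_le_card hTsub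
      rw [Nat.card_Icc] at this
      omega
    have h3 : (∑ s ∈ S, rS s) + (∑ t ∈ T, rT t) ≤ n*(2*n) + n*(2*n) :=
      add_le_add (le_trans h1 (Nat.mul_le_mul hScard hP2n))
        (le_trans h2 (Nat.mul_le_mul hTcard hP2n))
    have h4 : (((∑ s ∈ S, rS s) + (∑ t ∈ T, rT t) : ℕ) : ℤ)
        ≤ ((n*(2*n) + n*(2*n) : ℕ) : ℤ) := by exact_mod_cast h3
    have h5 : ((n*(2*n) + n*(2*n) : ℕ) : ℤ) = 4*(n:ℤ)^2 := by push_cast; ring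
    rw [hKS, hKT]
    push_cast at h4 ⊢
    linarith
  have hnZ : (2:ℤ) ≤ (n:ℤ) := by exact_mod_cast hn
  have hmZ : 100 * ((n:ℤ) + 1)^4 < (m:ℤ) := by exact_mod_cast hm
  have haZ : (1:ℤ) ≤ (a:ℤ) ∧ (a:ℤ) ≤ (n:ℤ) - 1 := by
    constructor
    · exact_mod_cast haI.1
    · have := haI.2; omega
  have hbZ : (1:ℤ) ≤ (b:ℤ) ∧ (b:ℤ) ≤ (n:ℤ) - 1 := by
    constructor
    · exact_mod_cast hbI.1
    · have := hbI.2; omega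
  have hexp : 100*((n:ℤ)+1)^4 = 100*(n:ℤ)^4+400*(n:ℤ)^3+600*(n:ℤ)^2+400*(n:ℤ)+100 := by ring
  have hp2 : (0:ℤ) ≤ (n:ℤ)^2 := by positivity
  have hp3 : (0:ℤ) ≤ (n:ℤ)^3 := by positivity
  have hp4 : (0:ℤ) ≤ (n:ℤ)^4 := by positivity
  have hp43 : (n:ℤ)^3 ≤ (n:ℤ)^4 := by
    calc (n:ℤ)^3 = (n:ℤ)^3 * 1 := by ring
      _ ≤ (n:ℤ)^3 * (n:ℤ) := by
          apply mul_le_mul_of_nonneg_left (by omega) (by positivity)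
      _ = (n:ℤ)^4 := by ring
  have hp32 : (n:ℤ)^2 ≤ (n:ℤ)^3 := by
    calc (n:ℤ)^2 = (n:ℤ)^2 * 1 := by ring
      _ ≤ (n:ℤ)^2 * (n:ℤ) := by
          apply mul_le_mul_of_nonneg_left (by omega) (by positivity)
      _ = (n:ℤ)^3 := by ring
  have hp21 : (n:ℤ) ≤ (n:ℤ)^2 := by
    calc (n:ℤ) = 1 * (n:ℤ) := by ring
      _ ≤ (n:ℤ) * (n:ℤ) := by
          apply mul_le_mul_of_nonneg_right (by omega) (by omega)
      _ = (n:ℤ)^2 := by ring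
  have hKSn : KS * (n:ℤ) ≤ 4 * (n:ℤ)^3 := by
    calc KS * (n:ℤ) ≤ (4*(n:ℤ)^2) * (n:ℤ) :=
          mul_le_mul_of_nonneg_right (by linarith) (by omega)
      _ = 4 * (n:ℤ)^3 := by ring
  have hKTn : KT * (n:ℤ) ≤ 4 * (n:ℤ)^3 := by
    calc KT * (n:ℤ) ≤ (4*(n:ℤ)^2) * (n:ℤ) :=
          mul_le_mul_of_nonneg_right (by linarith) (by omega)
      _ = 4 * (n:ℤ)^3 := by ring
  have hδ₁b : -((n:ℤ) + 4*(n:ℤ)^3) ≤ δ₁ ∧ δ₁ ≤ (n:ℤ) + 4*(n:ℤ)^3 := by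
    constructor <;> (rw [hδ₁]; linarith [hMSb, hMTb, hKSn, hKTn, hMS0, hMT0])
  have hm₁low : (m:ℤ) - 4*(n:ℤ)^2 ≤ m₁ := by rw [hm₁]; linarith
  have hm₁0 : 0 ≤ m₁ := by linarith
  have hbig : 8*(n:ℤ)^4 ≤ (m:ℤ) - 4*(n:ℤ)^2 - ((n:ℤ) + 4*(n:ℤ)^3) := by linarith
  have hlowx : (m:ℤ) - 4*(n:ℤ)^2 - ((n:ℤ) + 4*(n:ℤ)^3) ≤ x * P := by
    rw [hx]
    have h1 : 1 * m₁ ≤ (b:ℤ) * m₁ := mul_le_mul_of_nonneg_right hbZ.1 hm₁0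
    linarith [hδ₁b.1]
  have hlowy : (m:ℤ) - 4*(n:ℤ)^2 - ((n:ℤ) + 4*(n:ℤ)^3) ≤ y * P := by
    rw [hyP]
    have h1 : 1 * m₁ ≤ (a:ℤ) * m₁ := mul_le_mul_of_nonneg_right haZ.1 hm₁0
    linarith [hδ₁b.2]
  have hPle : (P:ℤ) ≤ 2*(n:ℤ) := by rw [hPZ]; omega
  have htarP : ((n:ℤ) * (KS + KT)) * (P:ℤ) ≤ 8*(n:ℤ)^4 := by
    calc ((n:ℤ) * (KS + KT)) * (P:ℤ) ≤ ((n:ℤ) * (4*(n:ℤ)^2)) * (2*(n:ℤ)) := by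
          apply mul_le_mul _ hPle (by rw [hPZ]; omega) (by positivity)
          exact mul_le_mul_of_nonneg_left hKb (by omega)
      _ = 8*(n:ℤ)^4 := by ring
  have hP0' : (0:ℤ) < (P:ℤ) := by exact_mod_cast hP0
  have hxge : (n:ℤ) * (KS + KT) ≤ x := by
    refine le_of_mul_le_mul_right ?_ hP0'
    linarith
  have hyge : (n:ℤ) * (KS + KT) ≤ y := by
    refine le_of_mul_le_mul_right ?_ hP0'
    linarith
  have hx0 : 0 ≤ x := le_trans (by positivity) hxge
  have hy0 : 0 ≤ y := le_trans (by positivity) hyge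
  -- assemble
  have hAx : ((x.toNat : ℕ) : ℤ) = x := Int.toNat_of_nonneg hx0
  have hBy : ((y.toNat : ℕ) : ℤ) = y := Int.toNat_of_nonneg hy0
  have hbal : ((x.toNat : ℕ) : ℤ) * (a:ℤ) - ((y.toNat : ℕ) : ℤ) * (b:ℤ) + R.sum = v - u := by
    rw [hAx, hBy, sumR, hydef]
    linear_combination hx - x * hPZ
  have hcRn : (n:ℤ) * ((Multiset.card R : ℕ) : ℤ) = (n:ℤ) * (KS + KT) := by rw [cardR]
  have hnA : n * Multiset.card R ≤ x.toNat := by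
    have hc1 : ((n * Multiset.card R : ℕ) : ℤ) = (n:ℤ) * ((Multiset.card R : ℕ) : ℤ) := by
      push_cast; ring
    omega
  have hnB : n * Multiset.card R ≤ y.toNat := by
    have hc1 : ((n * Multiset.card R : ℕ) : ℤ) = (n:ℤ) * ((Multiset.card R : ℕ) : ℤ) := by
      push_cast; ring
    omega
  have hwalk := realize hn hS hT hSsub hTsub hST1 hST2 R x.toNat y.toNat u v
    hu1 hu2 hv1 hv2 memR hbal hnA hnB
  refine hasWalk_congr hwalk ?_
  have hxy : x + y + (KS + KT) = (m:ℤ) := by rw [hydef, hm₁]; ring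
  omega


end ToepAux

/-- If `max S + min T ≤ n` and `min S + max T ≤ n`, then for all
sufficiently large `m`, existence of a directed walk of length `m` between two
vertices depends only on their difference (i.e. high Boolean powers of `T_n⟨S;T⟩`
are Toeplitz matrices). -/
theorem power_eventually_toeplitz (n : ℕ) (hn : 2 ≤ n) (S T : Finset ℕ)
    (hS : S.Nonempty) (hT : T.Nonempty)
    (hSsub : S ⊆ Finset.Icc 1 (n - 1)) (hTsub : T ⊆ Finset.Icc 1 (n - 1))
    (hST1 : S.max' hS + T.min' hT ≤ n) (hST2 : S.min' hS + T.max' hT ≤ n) :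
    ∃ M : ℕ, 0 < M ∧ ∀ m : ℕ, M < m →
      ∀ u ∈ Finset.Icc (1 : ℤ) (n : ℤ), ∀ v ∈ Finset.Icc (1 : ℤ) (n : ℤ),
      ∀ u' ∈ Finset.Icc (1 : ℤ) (n : ℤ), ∀ v' ∈ Finset.Icc (1 : ℤ) (n : ℤ),
        v - u = v' - u' → (HasWalk n S T m u v ↔ HasWalk n S T m u' v') := by
  refine ⟨100 * (n + 1)^4, by positivity, ?_⟩
  intro m hm u hu v hv u' hu' v' hv' hdiff
  rw [Finset.mem_Icc] at hu hv hu' hv'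
  constructor
  · intro h
    obtain ⟨L, hc, hs, hmem⟩ := ToepAux.walk_rep h
    exact ToepAux.repToWalk hn hS hT hSsub hTsub hST1 hST2 hm hu'.1 hu'.2 hv'.1 hv'.2
      hc (by rw [hs, hdiff]) hmem
  · intro h
    obtain ⟨L, hc, hs, hmem⟩ := ToepAux.walk_rep h
    exact ToepAux.repToWalk hn hS hT hSsub hTsub hST1 hST2 hm hu.1 hu.2 hv.1 hv.2
      hc (by rw [hs, hdiff]) hmem
end

section
/- Let D be the Toeplitz digraph of T_n⟨S;T⟩ and let u < v be vertices of D. Then u and v are adjacent in the competition graph C(D) if and only if at least one of the following holds: (1) v − u = s − s' for some s ∈ S with s ≤ n − u and some s' ∈ S with s' ≤ n − v; (2) v − u = t − t' for some t ∈ T with t ≤ v − 1 and some t' ∈ T with t' ≤ u − 1; (3) v − u = s + t for some s ∈ S and t ∈ T. -/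
/-- For vertices `u < v` of the Toeplitz digraph `D` of `T_n⟨S;T⟩`,
`u` and `v` are adjacent in the competition graph `C(D)` (i.e. have a common
out-neighbor) iff `v − u = s − s'` with `s ≤ n − u`, `s' ≤ n − v`, or
`v − u = t − t'` with `t ≤ v − 1`, `t' ≤ u − 1`, or `v − u = s + t`. -/
theorem competition_graph_characterization (n : ℕ) (hn : 2 ≤ n) (S T : Finset ℕ)
    (hS : S.Nonempty) (hT : T.Nonempty)
    (hSsub : S ⊆ Finset.Icc 1 (n - 1)) (hTsub : T ⊆ Finset.Icc 1 (n - 1))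
    (u v : ℤ) (hu : u ∈ Finset.Icc (1 : ℤ) (n : ℤ)) (hv : v ∈ Finset.Icc (1 : ℤ) (n : ℤ))
    (huv : u < v) :
    (∃ w : ℤ, ToepArc n S T u w ∧ ToepArc n S T v w) ↔
      ((∃ s ∈ S, ∃ s' ∈ S, (s : ℤ) ≤ (n : ℤ) - u ∧ (s' : ℤ) ≤ (n : ℤ) - v ∧
          v - u = (s : ℤ) - (s' : ℤ)) ∨
        (∃ t ∈ T, ∃ t' ∈ T, (t : ℤ) ≤ v - 1 ∧ (t' : ℤ) ≤ u - 1 ∧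
          v - u = (t : ℤ) - (t' : ℤ)) ∨
        (∃ s ∈ S, ∃ t ∈ T, v - u = (s : ℤ) + (t : ℤ))) := by
  simp only [Finset.mem_Icc] at hu hv
  have hSb : ∀ s ∈ S, 1 ≤ s ∧ s ≤ n - 1 := fun s hs => Finset.mem_Icc.mp (hSsub hs)
  have hTb : ∀ t ∈ T, 1 ≤ t ∧ t ≤ n - 1 := fun t ht => Finset.mem_Icc.mp (hTsub ht)
  constructor
  · rintro ⟨w, ⟨-, hw, harc1⟩, ⟨-, -, harc2⟩⟩
    simp only [Finset.mem_Icc] at hw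
    rcases harc1 with ⟨s, hs, hws⟩ | ⟨t, ht, hwt⟩
    · rcases harc2 with ⟨s', hs', hws'⟩ | ⟨t', ht', hwt'⟩
      · left
        exact ⟨s, hs, s', hs', by omega, by omega, by omega⟩
      · right; right
        exact ⟨s, hs, t', ht', by omega⟩
    · rcases harc2 with ⟨s', hs', hws'⟩ | ⟨t', ht', hwt'⟩
      · exfalso
        have h1 := hSb s' hs'
        have h2 := hTb t ht
        omega
      · right; left
        exact ⟨t', ht', t, ht, by omega, by omega, by omega⟩
  · rintro (⟨s, hs, s', hs', h1, h2, h3⟩ | ⟨t, ht, t', ht', h1, h2, h3⟩ | ⟨s, hs, t, ht, h3⟩)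
    · have hb := hSb s hs
      have hb' := hSb s' hs'
      refine ⟨u + s, ⟨?_, ?_, Or.inl ⟨s, hs, rfl⟩⟩, ?_, ?_, Or.inl ⟨s', hs', by omega⟩⟩ <;>
        simp only [Finset.mem_Icc] <;> omega
    · have hb := hTb t ht
      have hb' := hTb t' ht'
      refine ⟨u - t', ⟨?_, ?_, Or.inr ⟨t', ht', rfl⟩⟩, ?_, ?_, Or.inr ⟨t, ht, by omega⟩⟩ <;>
        simp only [Finset.mem_Icc] <;> omega
    · have hb := hSb s hs
      have hb' := hTb t ht
      refine ⟨u + s, ⟨?_, ?_, Or.inl ⟨s, hs, rfl⟩⟩, ?_, ?_, Or.inr ⟨t, ht, by omega⟩⟩ <;>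
        simp only [Finset.mem_Icc] <;> omega
end
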